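/- arXiv:2002.12777 — 4 statements merged into one kernel-verified Lean document; each statement's English description precedes it below -/
import Mathlib

section
/- Let ABC be a triangle such that B and C are not antipodal on the circumcircle, and let M_t be the intersection point of the tangent lines to the circumcircle at B and at C. Let (B_A, C_A) be a cevian pair from A with cevian intersection point N_A and Miquel–Steiner point M_A. Then the line B_A C_A is parallel to the line BC if and only if M_A lies on the line through A and M_t (the symmedian of ABC from A). -/
open EuclideanGeometry

/-- `(B_A, C_A)` is a cevian pair from `A` in triangle `ABC`: `B_A` lies on line `AC`
with `B_A ∉ {A, C}`, `C_A` lies on line `AB` with `C_A ∉ {A, B}`, and the lines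
`B B_A` and `C C_A` are not parallel. -/
def IsCevianPair (A B C B_A C_A : EuclideanSpace ℝ (Fin 2)) : Prop :=
  B_A ∈ line[ℝ, A, C] ∧ B_A ≠ A ∧ B_A ≠ C ∧
  C_A ∈ line[ℝ, A, B] ∧ C_A ≠ A ∧ C_A ≠ B ∧
  ¬ AffineSubspace.Parallel (line[ℝ, B, B_A]) (line[ℝ, C, C_A])

/-- `M` is a Miquel–Steiner point of the cevian pair `(B_A, C_A)` from `A` with cevian
intersection point `N_A`: it lies on the circumcircles of the four triangles
`A B B_A`, `A C C_A`, `C B_A N_A`, `B C_A N_A`. -/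
def IsMiquelPoint (A B C B_A C_A N_A M : EuclideanSpace ℝ (Fin 2)) : Prop :=
  Cospherical ({A, B, B_A, M} : Set (EuclideanSpace ℝ (Fin 2))) ∧
  Cospherical ({A, C, C_A, M} : Set (EuclideanSpace ℝ (Fin 2))) ∧
  Cospherical ({C, B_A, N_A, M} : Set (EuclideanSpace ℝ (Fin 2))) ∧
  Cospherical ({B, C_A, N_A, M} : Set (EuclideanSpace ℝ (Fin 2)))

/-- The circle `s` is tangent to the affine subspace `L` at `P`: `P` lies on both,
and `s` meets `L` only at `P`. -/
def IsTangentAt (s : Sphere (EuclideanSpace ℝ (Fin 2)))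
    (L : AffineSubspace ℝ (EuclideanSpace ℝ (Fin 2))) (P : EuclideanSpace ℝ (Fin 2)) : Prop :=
  P ∈ s ∧ P ∈ L ∧ ∀ x, x ∈ s → x ∈ L → x = P

lemma miquel_core (u0 u1 v0 v1 X Y M0 M1 P0 P1 Q0 Q1 d0 d1 s t : ℝ)
    (hcr : u0*v1 - u1*v0 ≠ 0)
    (hant : ¬(u0 + v0 - 2*X = 0 ∧ u1 + v1 - 2*Y = 0))
    (L1 : 2*(u0*X + u1*Y) = u0^2+u1^2)
    (L2 : 2*(v0*X + v1*Y) = v0^2+v1^2)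
    (H1 : (M0-u0)*(u0-X) + (M1-u1)*(u1-Y) = 0)
    (H2 : (M0-v0)*(v0-X) + (M1-v1)*(v1-Y) = 0)
    (LE1 : 2*(u0*P0 + u1*P1) = u0^2+u1^2)
    (LE2 : 2*(v0*P0 + v1*P1) = t*(v0^2+v1^2))
    (LF1 : 2*(v0*Q0 + v1*Q1) = v0^2+v1^2)
    (LF2 : 2*(u0*Q0 + u1*Q1) = s*(u0^2+u1^2))
    (PD1 : d0^2 + d1^2 = 2*(d0*P0 + d1*P1))
    (PD2 : d0^2 + d1^2 = 2*(d0*Q0 + d1*Q1))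
    (hd : ¬(d0 = 0 ∧ d1 = 0))
    (hG : ¬(Q0 - P0 = 0 ∧ Q1 - P1 = 0)) :
    (¬(M0 = 0 ∧ M1 = 0)) ∧ (d0*M1 - d1*M0 = 0 ↔ s = t) := by
  have sq0 : ∀ x y : ℝ, x^2 + y^2 = 0 → x = 0 ∧ y = 0 := by
    intro x y h
    constructor <;> nlinarith [sq_nonneg x, sq_nonneg y]
  have hp : u0^2+u1^2 ≠ 0 := by
    intro h; obtain ⟨h0, h1⟩ := sq0 _ _ h; apply hcr; rw [h0, h1]; ring
  have hq : v0^2+v1^2 ≠ 0 := by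
    intro h; obtain ⟨h0, h1⟩ := sq0 _ _ h; apply hcr; rw [h0, h1]; ring
  have hK : (u0-v0)^2+(u1-v1)^2 ≠ 0 := by
    intro h; obtain ⟨h0, h1⟩ := sq0 _ _ h
    apply hcr
    have e0 : u0 = v0 := by linarith
    have e1 : u1 = v1 := by linarith
    rw [e0, e1]; ring
  have hGn : (Q0-P0)^2+(Q1-P1)^2 ≠ 0 := by
    intro h; exact hG (sq0 _ _ h)
  have hw : u0*v0 + u1*v1 ≠ 0 := by
    intro hw0
    apply hant
    constructor
    · have hz : (u0*v1 - u1*v0) * (u0 + v0 - 2*X) = 0 := by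
        linear_combination (-v1)*L1 + u1*L2 + (v1-u1)*hw0
      exact (mul_eq_zero.mp hz).resolve_left hcr
    · have hz : (u0*v1 - u1*v0) * (u1 + v1 - 2*Y) = 0 := by
        linear_combination v0*L1 - u0*L2 - (v0-u0)*hw0
      exact (mul_eq_zero.mp hz).resolve_left hcr
  -- T1 : 2*w*a' = q*cr,  T2 : 2*w*b' = p*cr
  have hKT1 : ((u0-v0)^2+(u1-v1)^2) *
      (2*(u0*v0+u1*v1)*(M0*v1-M1*v0) - (v0^2+v1^2)*(u0*v1-u1*v0)) = 0 := by
    linear_combination (2*(u0*v1-u1*v0)*(v0^2+v1^2))*H1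
      - (2*(u0*v1-u1*v0)*(2*(u0*v0+u1*v1)-(v0^2+v1^2)))*H2
      + ((v0^2+v1^2)*((M0*v1-M1*v0)-(u0*v1-u1*v0))
          - (2*(u0*v0+u1*v1)-(v0^2+v1^2))*(M0*v1-M1*v0))*L1
      + ((v0^2+v1^2)*(M1*u0-M0*u1)
          - (2*(u0*v0+u1*v1)-(v0^2+v1^2))*((M1*u0-M0*u1)-(u0*v1-u1*v0)))*L2
  have T1 : 2*(u0*v0+u1*v1)*(M0*v1-M1*v0) = (v0^2+v1^2)*(u0*v1-u1*v0) := by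
    have := (mul_eq_zero.mp hKT1).resolve_left hK
    linarith [this]
  have hKT2 : ((u0-v0)^2+(u1-v1)^2) *
      (2*(u0*v0+u1*v1)*(M1*u0-M0*u1) - (u0^2+u1^2)*(u0*v1-u1*v0)) = 0 := by
    linear_combination (2*(u0*v1-u1*v0)*(u0^2+u1^2))*H2
      - (2*(u0*v1-u1*v0)*(2*(u0*v0+u1*v1)-(u0^2+u1^2)))*H1
      + ((u0^2+u1^2)*(M0*v1-M1*v0)
          - (2*(u0*v0+u1*v1)-(u0^2+u1^2))*((M0*v1-M1*v0)-(u0*v1-u1*v0)))*L1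
      + ((u0^2+u1^2)*((M1*u0-M0*u1)-(u0*v1-u1*v0))
          - (2*(u0*v0+u1*v1)-(u0^2+u1^2))*(M1*u0-M0*u1))*L2
  have T2 : 2*(u0*v0+u1*v1)*(M1*u0-M0*u1) = (u0^2+u1^2)*(u0*v1-u1*v0) := by
    have := (mul_eq_zero.mp hKT2).resolve_left hK
    linarith [this]
  have hdG : d0*(Q0-P0) + d1*(Q1-P1) = 0 := by
    linear_combination (1/2)*PD1 - (1/2)*PD2
  have hUG : 2*(u0*(Q0-P0)+u1*(Q1-P1)) = (s-1)*(u0^2+u1^2) := by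
    linear_combination LF2 - LE1
  have hVG : 2*(v0*(Q0-P0)+v1*(Q1-P1)) = (1-t)*(v0^2+v1^2) := by
    linear_combination LF1 - LE2
  have hKEYcr : (u0*v1-u1*v0) *
      (4*(u0*v0+u1*v1)*(M0*(Q0-P0)+M1*(Q1-P1)) - (u0^2+u1^2)*(v0^2+v1^2)*(s-t)) = 0 := by
    linear_combination (2*(u0*v0+u1*v1)*(M0*v1-M1*v0))*hUG
      + (2*(u0*v0+u1*v1)*(M1*u0-M0*u1))*hVG
      + ((s-1)*(u0^2+u1^2))*T1 + ((1-t)*(v0^2+v1^2))*T2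
  have KEY : 4*(u0*v0+u1*v1)*(M0*(Q0-P0)+M1*(Q1-P1)) = (u0^2+u1^2)*(v0^2+v1^2)*(s-t) := by
    have := (mul_eq_zero.mp hKEYcr).resolve_left hcr
    linarith [this]
  have hcdG : d0*(Q1-P1) - d1*(Q0-P0) ≠ 0 := by
    intro h0
    apply hd
    constructor
    · have : d0*((Q0-P0)^2+(Q1-P1)^2) = 0 := by
        linear_combination (Q0-P0)*hdG + (Q1-P1)*h0
      exact (mul_eq_zero.mp this).resolve_right hGn
    · have : d1*((Q0-P0)^2+(Q1-P1)^2) = 0 := by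
        linear_combination (Q1-P1)*hdG - (Q0-P0)*h0
      exact (mul_eq_zero.mp this).resolve_right hGn
  constructor
  · rintro ⟨h0, h1⟩
    rw [h0, h1] at T1
    have : (v0^2+v1^2)*(u0*v1-u1*v0) = 0 := by linarith [T1]
    rcases mul_eq_zero.mp this with h | h
    · exact hq h
    · exact hcr h
  constructor
  · intro hcross
    have hMG0 : (M0*(Q0-P0)+M1*(Q1-P1)) * (d0*(Q1-P1) - d1*(Q0-P0)) = 0 := by
      linear_combination ((Q0-P0)^2+(Q1-P1)^2)*hcross - ((Q0-P0)*M1-(Q1-P1)*M0)*hdG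
    have hMG : M0*(Q0-P0)+M1*(Q1-P1) = 0 := (mul_eq_zero.mp hMG0).resolve_right hcdG
    have : (u0^2+u1^2)*(v0^2+v1^2)*(s-t) = 0 := by
      rw [← KEY, hMG]; ring
    rcases mul_eq_zero.mp this with h | h
    · rcases mul_eq_zero.mp h with h' | h'
      · exact absurd h' hp
      · exact absurd h' hq
    · linarith [h]
  · intro hst
    have hIG : M0*(Q0-P0)+M1*(Q1-P1) = 0 := by
      have h4 : 4*(u0*v0+u1*v1)*(M0*(Q0-P0)+M1*(Q1-P1)) = 0 := by
        rw [KEY, hst]; ring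
      have := mul_eq_zero.mp h4
      rcases this with h | h
      · exfalso
        rcases mul_eq_zero.mp h with h' | h'
        · norm_num at h'
        · exact hw h'
      · exact h
    have : (d0*M1 - d1*M0)*((Q0-P0)^2+(Q1-P1)^2) = 0 := by
      linear_combination ((Q0-P0)*M1-(Q1-P1)*M0)*hdG + (d0*(Q1-P1)-d1*(Q0-P0))*hIG
    exact (mul_eq_zero.mp this).resolve_right hGn

namespace MiquelAux

lemma sum_sq_eq_zero {x y : ℝ} (h : x^2 + y^2 = 0) : x = 0 ∧ y = 0 := by
  constructor <;> nlinarith [sq_nonneg x, sq_nonneg y]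

lemma ext2 {x y : EuclideanSpace ℝ (Fin 2)} (h0 : x 0 = y 0) (h1 : x 1 = y 1) : x = y := by
  apply PiLp.ext; intro i; fin_cases i <;> assumption

lemma dist_sq (x y : EuclideanSpace ℝ (Fin 2)) :
    dist x y ^ 2 = (x 0 - y 0)^2 + (x 1 - y 1)^2 := by
  rw [EuclideanSpace.dist_eq, Real.sq_sqrt (by positivity)]
  simp [Fin.sum_univ_two, Real.dist_eq, sq_abs]

lemma dist_sq_eq {x y o : EuclideanSpace ℝ (Fin 2)} (h : dist x o = dist y o) :
    (x 0 - o 0)^2 + (x 1 - o 1)^2 = (y 0 - o 0)^2 + (y 1 - o 1)^2 := by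
  rw [← dist_sq, ← dist_sq, h]

lemma tangent_perp {S : Sphere (EuclideanSpace ℝ (Fin 2))}
    {L : AffineSubspace ℝ (EuclideanSpace ℝ (Fin 2))} {B M : EuclideanSpace ℝ (Fin 2)}
    (ht : IsTangentAt S L B) (hM : M ∈ L) :
    (M 0 - B 0)*(B 0 - S.center 0) + (M 1 - B 1)*(B 1 - S.center 1) = 0 := by
  by_contra he
  have hMB : ¬(M 0 - B 0 = 0 ∧ M 1 - B 1 = 0) := by
    rintro ⟨h0, h1⟩; apply he; rw [h0, h1]; ring
  have hn : (M 0 - B 0)^2 + (M 1 - B 1)^2 ≠ 0 := fun h => hMB (sum_sq_eq_zero h)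
  set e := (M 0 - B 0)*(B 0 - S.center 0) + (M 1 - B 1)*(B 1 - S.center 1) with he_def
  set c : ℝ := -2*e/((M 0 - B 0)^2 + (M 1 - B 1)^2) with hc_def
  have hc : c ≠ 0 := by
    apply div_ne_zero _ hn
    intro h; apply he; linarith
  set x : EuclideanSpace ℝ (Fin 2) := c • (M -ᵥ B) +ᵥ B with hx_def
  have hxL : x ∈ L := L.smul_vsub_vadd_mem c hM ht.2.1 ht.2.1
  have hx0 : x 0 = c*(M 0 - B 0) + B 0 := by
    simp [hx_def, vsub_eq_sub, vadd_eq_add]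
  have hx1 : x 1 = c*(M 1 - B 1) + B 1 := by
    simp [hx_def, vsub_eq_sub, vadd_eq_add]
  have hxS : x ∈ S := by
    rw [mem_sphere]
    have hB : dist B S.center = S.radius := mem_sphere.mp ht.1
    rw [← hB]
    have h2 : dist x S.center ^ 2 = dist B S.center ^ 2 := by
      rw [dist_sq, dist_sq, hx0, hx1, hc_def, he_def]
      field_simp
      ring
    calc dist x S.center = Real.sqrt (dist x S.center ^ 2) := (Real.sqrt_sq dist_nonneg).symm
      _ = Real.sqrt (dist B S.center ^ 2) := by rw [h2]
      _ = dist B S.center := Real.sqrt_sq dist_nonneg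
  have hxB : x = B := ht.2.2 x hxS hxL
  apply hMB
  constructor
  · have := congrArg (fun z : EuclideanSpace ℝ (Fin 2) => z 0) hxB
    simp only [hx0] at this
    have h0 : c * (M 0 - B 0) = 0 := by linarith
    exact (mul_eq_zero.mp h0).resolve_left hc
  · have := congrArg (fun z : EuclideanSpace ℝ (Fin 2) => z 1) hxB
    simp only [hx1] at this
    have h1 : c * (M 1 - B 1) = 0 := by linarith
    exact (mul_eq_zero.mp h1).resolve_left hc

lemma cross_ne {P Q R : EuclideanSpace ℝ (Fin 2)} (h : AffineIndependent ℝ ![P, Q, R]) :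
    (Q 0 - P 0)*(R 1 - P 1) - (Q 1 - P 1)*(R 0 - P 0) ≠ 0 := by
  intro hc
  rw [affineIndependent_iff_not_collinear_set] at h
  apply h
  rw [collinear_iff_of_mem (Set.mem_insert P {Q, R})]
  by_cases hQP : Q = P
  · refine ⟨R - P, ?_⟩
    intro p hp
    rcases hp with rfl | rfl | rfl
    · exact ⟨0, by simp⟩
    · exact ⟨0, by simp [hQP]⟩
    · exact ⟨1, by simp [vadd_eq_add]⟩
  · have hne : ¬(Q 0 - P 0 = 0 ∧ Q 1 - P 1 = 0) := by
      rintro ⟨h0, h1⟩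
      exact hQP (ext2 (by linarith) (by linarith))
    refine ⟨Q - P, ?_⟩
    intro p hp
    rcases hp with rfl | rfl | rfl
    · exact ⟨0, by simp⟩
    · exact ⟨1, by simp [vadd_eq_add]⟩
    · rcases not_and_or.mp hne with h0 | h1
      · refine ⟨(p 0 - P 0)/(Q 0 - P 0), ext2 ?_ ?_⟩ <;>
          · simp only [vadd_eq_add, PiLp.add_apply, PiLp.smul_apply, PiLp.sub_apply,
              smul_eq_mul]
            field_simp
            try first | linear_combination hc | linear_combination -hc | ring
      · refine ⟨(p 1 - P 1)/(Q 1 - P 1), ext2 ?_ ?_⟩ <;>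
          · simp only [vadd_eq_add, PiLp.add_apply, PiLp.smul_apply, PiLp.sub_apply,
              smul_eq_mul]
            field_simp
            try first | linear_combination hc | linear_combination -hc | ring

end MiquelAux

namespace MiquelAux

lemma mid_coord (B C : EuclideanSpace ℝ (Fin 2)) (i : Fin 2) :
    midpoint ℝ B C i = (B i + C i)/2 := by
  rw [midpoint_eq_smul_add]
  simp
  ring

end MiquelAux

open MiquelAux in
/-- `B_A C_A ∥ BC` if and only if the Miquel–Steiner point `M_A` lies on the
symmedian of `ABC` from `A`, i.e. the line through `A` and the intersection
point `M_t` of the tangents to the circumcircle at `B` and `C`. -/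
theorem parallel_iff_miquel_point_mem_symmedian
    (A B C B_A C_A N_A M_A M_t : EuclideanSpace ℝ (Fin 2))
    (hABC : AffineIndependent ℝ ![A, B, C])
    (S : Sphere (EuclideanSpace ℝ (Fin 2)))
    (hS : A ∈ S ∧ B ∈ S ∧ C ∈ S)
    (hant : midpoint ℝ B C ≠ S.center)
    (lB lC : AffineSubspace ℝ (EuclideanSpace ℝ (Fin 2)))
    (hlB : (∃ p q : EuclideanSpace ℝ (Fin 2), p ≠ q ∧ lB = line[ℝ, p, q]) ∧
      IsTangentAt S lB B)
    (hlC : (∃ p q : EuclideanSpace ℝ (Fin 2), p ≠ q ∧ lC = line[ℝ, p, q]) ∧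
      IsTangentAt S lC C)
    (hMt : M_t ∈ lB ∧ M_t ∈ lC)
    (hcev : IsCevianPair A B C B_A C_A)
    (hN₁ : N_A ∈ line[ℝ, B, B_A]) (hN₂ : N_A ∈ line[ℝ, C, C_A])
    (hCBN : AffineIndependent ℝ ![C, B_A, N_A])
    (hBCN : AffineIndependent ℝ ![B, C_A, N_A])
    (hM : IsMiquelPoint A B C B_A C_A N_A M_A) :
    AffineSubspace.Parallel (line[ℝ, B_A, C_A]) (line[ℝ, B, C]) ↔
      M_A ∈ line[ℝ, A, M_t] := by
  obtain ⟨hBA_mem, hBA_A, hBA_C, hCA_mem, hCA_A, hCA_B, -⟩ := hcev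
  -- cross products and basic distinctness
  have hcr : (B 0 - A 0)*(C 1 - A 1) - (B 1 - A 1)*(C 0 - A 0) ≠ 0 := cross_ne hABC
  have hAC : A ≠ C := by
    intro h; apply hcr; rw [h]; ring
  -- the cevian parameters
  obtain ⟨t, ht⟩ : ∃ t : ℝ, t • (C -ᵥ A) = B_A -ᵥ A := by
    have h := hBA_mem
    rw [show B_A = (B_A -ᵥ A) +ᵥ A from (vsub_vadd _ _).symm] at h
    exact vadd_left_mem_affineSpan_pair.mp h
  obtain ⟨s, hs⟩ : ∃ s : ℝ, s • (B -ᵥ A) = C_A -ᵥ A := by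
    have h := hCA_mem
    rw [show C_A = (C_A -ᵥ A) +ᵥ A from (vsub_vadd _ _).symm] at h
    exact vadd_left_mem_affineSpan_pair.mp h
  have hBA0 : B_A 0 = A 0 + t*(C 0 - A 0) := by
    have := congrFun (congrArg WithLp.ofLp ht) 0
    simp only [vsub_eq_sub, PiLp.smul_apply, PiLp.sub_apply, smul_eq_mul] at this
    linarith
  have hBA1 : B_A 1 = A 1 + t*(C 1 - A 1) := by
    have := congrFun (congrArg WithLp.ofLp ht) 1
    simp only [vsub_eq_sub, PiLp.smul_apply, PiLp.sub_apply, smul_eq_mul] at this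
    linarith
  have hCA0 : C_A 0 = A 0 + s*(B 0 - A 0) := by
    have := congrFun (congrArg WithLp.ofLp hs) 0
    simp only [vsub_eq_sub, PiLp.smul_apply, PiLp.sub_apply, smul_eq_mul] at this
    linarith
  have hCA1 : C_A 1 = A 1 + s*(B 1 - A 1) := by
    have := congrFun (congrArg WithLp.ofLp hs) 1
    simp only [vsub_eq_sub, PiLp.smul_apply, PiLp.sub_apply, smul_eq_mul] at this
    linarith
  have ht0 : t ≠ 0 := by
    intro h
    apply hBA_A
    apply ext2 <;> [rw [hBA0]; rw [hBA1]] <;> rw [h] <;> ring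
  have hs0 : s ≠ 0 := by
    intro h
    apply hCA_A
    apply ext2 <;> [rw [hCA0]; rw [hCA1]] <;> rw [h] <;> ring
  -- circumcircle equations
  have hdAB : dist A S.center = dist B S.center :=
    (mem_sphere.mp hS.1).trans (mem_sphere.mp hS.2.1).symm
  have hdAC : dist A S.center = dist C S.center :=
    (mem_sphere.mp hS.1).trans (mem_sphere.mp hS.2.2).symm
  have L1 : 2*((B 0 - A 0)*(S.center 0 - A 0) + (B 1 - A 1)*(S.center 1 - A 1))
      = (B 0 - A 0)^2 + (B 1 - A 1)^2 := by
    linear_combination dist_sq_eq hdAB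
  have L2 : 2*((C 0 - A 0)*(S.center 0 - A 0) + (C 1 - A 1)*(S.center 1 - A 1))
      = (C 0 - A 0)^2 + (C 1 - A 1)^2 := by
    linear_combination dist_sq_eq hdAC
  -- tangent line equations
  have htB := tangent_perp hlB.2 hMt.1
  have htC := tangent_perp hlC.2 hMt.2
  have H1 : ((M_t 0 - A 0) - (B 0 - A 0))*((B 0 - A 0) - (S.center 0 - A 0))
      + ((M_t 1 - A 1) - (B 1 - A 1))*((B 1 - A 1) - (S.center 1 - A 1)) = 0 := by
    linear_combination htB
  have H2 : ((M_t 0 - A 0) - (C 0 - A 0))*((C 0 - A 0) - (S.center 0 - A 0))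
      + ((M_t 1 - A 1) - (C 1 - A 1))*((C 1 - A 1) - (S.center 1 - A 1)) = 0 := by
    linear_combination htC
  -- non-right angle at A
  have hant' : ¬((B 0 - A 0) + (C 0 - A 0) - 2*(S.center 0 - A 0) = 0 ∧
      (B 1 - A 1) + (C 1 - A 1) - 2*(S.center 1 - A 1) = 0) := by
    rintro ⟨h0, h1⟩
    apply hant
    apply ext2
    · rw [mid_coord]; linarith
    · rw [mid_coord]; linarith
  -- circle through A, B, B_A, M_A
  obtain ⟨E, r₁, hE⟩ := hM.1
  have hE_A : dist A E = r₁ := hE A (by simp)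
  have hE_B : dist B E = r₁ := hE B (by simp)
  have hE_BA : dist B_A E = r₁ := hE B_A (by simp)
  have hE_M : dist M_A E = r₁ := hE M_A (by simp)
  -- circle through A, C, C_A, M_A
  obtain ⟨F, r₂, hF⟩ := hM.2.1
  have hF_A : dist A F = r₂ := hF A (by simp)
  have hF_C : dist C F = r₂ := hF C (by simp)
  have hF_CA : dist C_A F = r₂ := hF C_A (by simp)
  have hF_M : dist M_A F = r₂ := hF M_A (by simp)
  have LE1 : 2*((B 0 - A 0)*(E 0 - A 0) + (B 1 - A 1)*(E 1 - A 1))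
      = (B 0 - A 0)^2 + (B 1 - A 1)^2 := by
    linear_combination dist_sq_eq (hE_A.trans hE_B.symm)
  have LE2 : 2*((C 0 - A 0)*(E 0 - A 0) + (C 1 - A 1)*(E 1 - A 1))
      = t*((C 0 - A 0)^2 + (C 1 - A 1)^2) := by
    have hd2 := dist_sq_eq (hE_A.trans hE_BA.symm)
    rw [hBA0, hBA1] at hd2
    have ht2 : t*(2*((C 0 - A 0)*(E 0 - A 0) + (C 1 - A 1)*(E 1 - A 1))
        - t*((C 0 - A 0)^2 + (C 1 - A 1)^2)) = 0 := by
      linear_combination hd2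
    have := (mul_eq_zero.mp ht2).resolve_left ht0
    linarith
  have LF1 : 2*((C 0 - A 0)*(F 0 - A 0) + (C 1 - A 1)*(F 1 - A 1))
      = (C 0 - A 0)^2 + (C 1 - A 1)^2 := by
    linear_combination dist_sq_eq (hF_A.trans hF_C.symm)
  have LF2 : 2*((B 0 - A 0)*(F 0 - A 0) + (B 1 - A 1)*(F 1 - A 1))
      = s*((B 0 - A 0)^2 + (B 1 - A 1)^2) := by
    have hd2 := dist_sq_eq (hF_A.trans hF_CA.symm)
    rw [hCA0, hCA1] at hd2
    have hs2 : s*(2*((B 0 - A 0)*(F 0 - A 0) + (B 1 - A 1)*(F 1 - A 1))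
        - s*((B 0 - A 0)^2 + (B 1 - A 1)^2)) = 0 := by
      linear_combination hd2
    have := (mul_eq_zero.mp hs2).resolve_left hs0
    linarith
  have PD1 : (M_A 0 - A 0)^2 + (M_A 1 - A 1)^2
      = 2*((M_A 0 - A 0)*(E 0 - A 0) + (M_A 1 - A 1)*(E 1 - A 1)) := by
    linear_combination -dist_sq_eq (hE_A.trans hE_M.symm)
  have PD2 : (M_A 0 - A 0)^2 + (M_A 1 - A 1)^2
      = 2*((M_A 0 - A 0)*(F 0 - A 0) + (M_A 1 - A 1)*(F 1 - A 1)) := by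
    linear_combination -dist_sq_eq (hF_A.trans hF_M.symm)
  -- M_A ≠ A
  have hdXA : ¬(M_A 0 - A 0 = 0 ∧ M_A 1 - A 1 = 0) := by
    rintro ⟨h0, h1⟩
    have hMAeq : M_A = A := ext2 (by linarith) (by linarith)
    have hsp3 := hM.2.2.1
    rw [hMAeq] at hsp3
    have haff := hsp3.affineIndependent_of_mem_of_ne
      (p₁ := C) (p₂ := B_A) (p₃ := A) (by simp) (by simp) (by simp)
      hBA_C.symm hAC.symm (Ne.symm (Ne.symm hBA_A))
    apply cross_ne haff
    rw [hBA0, hBA1]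
    ring
  -- the two circle centers are distinct
  have hG : ¬((F 0 - A 0) - (E 0 - A 0) = 0 ∧ (F 1 - A 1) - (E 1 - A 1) = 0) := by
    rintro ⟨h0, h1⟩
    have hFE : F = E := ext2 (by linarith) (by linarith)
    have hr12 : r₂ = r₁ := by
      rw [← hF_A, hFE, hE_A]
    have hsp : Cospherical ({A, B_A, C} : Set (EuclideanSpace ℝ (Fin 2))) := by
      refine ⟨E, r₁, ?_⟩
      rintro p (rfl | rfl | rfl)
      · exact hE_A
      · exact hE_BA
      · rw [← hFE, hF_C, hr12]
    have haff := hsp.affineIndependent_of_ne hBA_A.symm hAC hBA_C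
    apply cross_ne haff
    rw [hBA0, hBA1]
    ring
  -- the core algebraic lemma
  obtain ⟨hMne, hiff⟩ := miquel_core (B 0 - A 0) (B 1 - A 1) (C 0 - A 0) (C 1 - A 1)
    (S.center 0 - A 0) (S.center 1 - A 1) (M_t 0 - A 0) (M_t 1 - A 1)
    (E 0 - A 0) (E 1 - A 1) (F 0 - A 0) (F 1 - A 1)
    (M_A 0 - A 0) (M_A 1 - A 1) s t
    hcr hant' L1 L2 H1 H2 LE1 LE2 LF1 LF2 PD1 PD2 hdXA hG
  constructor
  · -- parallel → on symmedian
    intro hpar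
    have hsp := AffineSubspace.affineSpan_pair_parallel_iff_vectorSpan_eq.mp hpar
    rw [vectorSpan_pair, vectorSpan_pair] at hsp
    have hmem : B -ᵥ C ∈ (ℝ ∙ (B_A -ᵥ C_A)) := by
      rw [hsp]; exact Submodule.mem_span_singleton_self _
    obtain ⟨k, hk⟩ := Submodule.mem_span_singleton.mp hmem
    have hk0 : k*((A 0 + t*(C 0 - A 0)) - (A 0 + s*(B 0 - A 0))) = B 0 - C 0 := by
      rw [← hBA0, ← hCA0]
      have := congrFun (congrArg WithLp.ofLp hk) 0
      simpa [vsub_eq_sub] using this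
    have hk1 : k*((A 1 + t*(C 1 - A 1)) - (A 1 + s*(B 1 - A 1))) = B 1 - C 1 := by
      rw [← hBA1, ← hCA1]
      have := congrFun (congrArg WithLp.ofLp hk) 1
      simpa [vsub_eq_sub] using this
    have hks : (k*s + 1)*((B 0 - A 0)*(C 1 - A 1) - (B 1 - A 1)*(C 0 - A 0)) = 0 := by
      linear_combination (-(C 1 - A 1))*hk0 + (C 0 - A 0)*hk1
    have hkt : (k*t + 1)*((B 0 - A 0)*(C 1 - A 1) - (B 1 - A 1)*(C 0 - A 0)) = 0 := by
      linear_combination (-(B 1 - A 1))*hk0 + (B 0 - A 0)*hk1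
    have hks' : k*s = -1 := by
      have := (mul_eq_zero.mp hks).resolve_right hcr; linarith
    have hkt' : k*t = -1 := by
      have := (mul_eq_zero.mp hkt).resolve_right hcr; linarith
    have hk0' : k ≠ 0 := by
      intro h; rw [h] at hks'; norm_num at hks'
    have hst : s = t := mul_left_cancel₀ hk0' (hks'.trans hkt'.symm)
    -- from s = t conclude collinearity
    have hcross := hiff.mpr hst
    rcases not_and_or.mp hMne with hM0 | hM1
    · have hr : ((M_A 0 - A 0)/(M_t 0 - A 0)) • (M_t -ᵥ A) = M_A -ᵥ A := by
        apply ext2 <;>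
          simp only [vsub_eq_sub, PiLp.smul_apply, PiLp.sub_apply, smul_eq_mul]
        · field_simp
        · field_simp
          first | linear_combination hcross | linear_combination -hcross | linear_combination 2*hcross | linear_combination (-2)*hcross
      have := vadd_left_mem_affineSpan_pair.mpr ⟨_, hr⟩
      simpa [vsub_vadd] using this
    · have hr : ((M_A 1 - A 1)/(M_t 1 - A 1)) • (M_t -ᵥ A) = M_A -ᵥ A := by
        apply ext2 <;>
          simp only [vsub_eq_sub, PiLp.smul_apply, PiLp.sub_apply, smul_eq_mul]
        · field_simp
          first | linear_combination hcross | linear_combination -hcross | linear_combination 2*hcross | linear_combination (-2)*hcross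
        · field_simp
      have := vadd_left_mem_affineSpan_pair.mpr ⟨_, hr⟩
      simpa [vsub_vadd] using this
  · -- on symmedian → parallel
    intro hmem
    rw [show M_A = (M_A -ᵥ A) +ᵥ A from (vsub_vadd _ _).symm] at hmem
    obtain ⟨r, hr⟩ := vadd_left_mem_affineSpan_pair.mp hmem
    have hr0 : r*(M_t 0 - A 0) = M_A 0 - A 0 := by
      have := congrFun (congrArg WithLp.ofLp hr) 0
      simpa [vsub_eq_sub] using this
    have hr1 : r*(M_t 1 - A 1) = M_A 1 - A 1 := by
      have := congrFun (congrArg WithLp.ofLp hr) 1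
      simpa [vsub_eq_sub] using this
    have hcross : (M_A 0 - A 0)*(M_t 1 - A 1) - (M_A 1 - A 1)*(M_t 0 - A 0) = 0 := by
      rw [← hr0, ← hr1]; ring
    have hst : s = t := hiff.mp hcross
    have hvec : B_A -ᵥ C_A = (-t) • (B -ᵥ C) := by
      apply ext2
      · simp only [vsub_eq_sub, PiLp.smul_apply, PiLp.sub_apply, smul_eq_mul]
        rw [hBA0, hCA0, hst]; ring
      · simp only [vsub_eq_sub, PiLp.smul_apply, PiLp.sub_apply, smul_eq_mul]
        rw [hBA1, hCA1, hst]; ring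
    rw [AffineSubspace.affineSpan_pair_parallel_iff_vectorSpan_eq,
      vectorSpan_pair, vectorSpan_pair, hvec,
      Submodule.span_singleton_smul_eq (isUnit_iff_ne_zero.mpr (neg_ne_zero.mpr ht0)) _]
end

section
/- Let ABC be a triangle such that B and C are not antipodal on the circumcircle, and let M_t be the intersection point of the tangent lines to the circumcircle at B and at C. Let (B_A, C_A) be a cevian pair from A with cevian intersection point N_A and Miquel–Steiner point M_A, and assume M_A ≠ A and N_A ≠ A. Then M_A lies on the line through A and M_t (the symmedian from A) if and only if N_A lies on the line through A and the midpoint of segment BC (the median from A). -/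
open EuclideanGeometry RealInnerProductSpace

set_option linter.unusedVariables false

private lemma mem_line_iff' (P Q X : EuclideanSpace ℝ (Fin 2)) :
    X ∈ line[ℝ, P, Q] ↔ ∃ r : ℝ, X - P = r • (Q - P) := by
  constructor
  · intro h
    obtain ⟨r, hr⟩ := vadd_left_mem_affineSpan_pair.1
      (show (X - P) +ᵥ P ∈ line[ℝ, P, Q] by simpa using h)
    exact ⟨r, by rw [← hr, vsub_eq_sub]⟩
  · rintro ⟨r, hr⟩
    have hX : X = r • (Q -ᵥ P) +ᵥ P := by
      rw [vsub_eq_sub, vadd_eq_add, ← hr]; abel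
    rw [hX]
    exact smul_vsub_vadd_mem_affineSpan_pair r P Q

private lemma norm_eq_of_inner_self_eq {v w : EuclideanSpace ℝ (Fin 2)}
    (h : ⟪v, v⟫ = ⟪w, w⟫) : ‖v‖ = ‖w‖ := by
  rw [real_inner_self_eq_norm_mul_norm, real_inner_self_eq_norm_mul_norm] at h
  nlinarith [norm_nonneg v, norm_nonneg w]

private lemma inner_self_eq_of_dist_eq {p q o : EuclideanSpace ℝ (Fin 2)}
    (h : dist p o = dist q o) :
    ⟪p - o, p - o⟫ = ⟪q - o, q - o⟫ := by
  rw [dist_eq_norm, dist_eq_norm] at h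
  rw [real_inner_self_eq_norm_mul_norm, real_inner_self_eq_norm_mul_norm, h]

private lemma inner_combo (e1 e2 : EuclideanSpace ℝ (Fin 2)) (p1 q1 p2 q2 : ℝ) :
    ⟪p1 • e1 + q1 • e2, p2 • e1 + q2 • e2⟫
      = p1*p2*⟪e1, e1⟫ + (p1*q2+q1*p2)*⟪e1, e2⟫ + q1*q2*⟪e2, e2⟫ := by
  simp [inner_add_left, inner_add_right, real_inner_smul_left, real_inner_smul_right,
    real_inner_comm e2 e1]
  ring

private lemma linIndep2 {A B C : EuclideanSpace ℝ (Fin 2)}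
    (h : AffineIndependent ℝ ![A, B, C]) : LinearIndependent ℝ ![B - A, C - A] := by
  rw [affineIndependent_iff_not_collinear_set] at h
  rw [linearIndependent_fin2]
  constructor
  · intro h0
    apply h
    have hCA : C = A := by
      rw [Matrix.cons_val_one, Matrix.cons_val_zero] at h0
      rwa [sub_eq_zero] at h0
    have : ({A, B, C} : Set (EuclideanSpace ℝ (Fin 2))) = {B, A} := by
      rw [hCA]; ext z; simp [or_comm]
    rw [this]
    exact collinear_pair ℝ B A
  · intro r hr
    apply h
    rw [collinear_iff_of_mem (Set.mem_insert A {B, C})]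
    refine ⟨C - A, fun pt hpt => ?_⟩
    simp only [Set.mem_insert_iff, Set.mem_singleton_iff] at hpt
    rcases hpt with rfl | rfl | rfl
    · exact ⟨0, by simp⟩
    · refine ⟨r, ?_⟩
      simp only [Matrix.cons_val_one, Matrix.head_cons, Matrix.cons_val_zero] at hr
      rw [vadd_eq_add, hr]; abel
    · exact ⟨1, by simp⟩

private lemma coeffs_eq_zero {e1 e2 : EuclideanSpace ℝ (Fin 2)}
    (hli : LinearIndependent ℝ ![e1, e2]) {α β : ℝ} (h : α • e1 + β • e2 = 0) :
    α = 0 ∧ β = 0 := by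
  have := Fintype.linearIndependent_iff.1 hli ![α, β] (by simpa [Fin.sum_univ_two] using h)
  exact ⟨this 0, this 1⟩

private lemma span2 {e1 e2 : EuclideanSpace ℝ (Fin 2)}
    (hli : LinearIndependent ℝ ![e1, e2]) (w : EuclideanSpace ℝ (Fin 2)) :
    ∃ α β : ℝ, w = α • e1 + β • e2 := by
  have card : Fintype.card (Fin 2) = Module.finrank ℝ (EuclideanSpace ℝ (Fin 2)) := by
    simp [finrank_euclideanSpace_fin]
  let bas := basisOfLinearIndependentOfCardEqFinrank hli card
  have hb : ⇑bas = ![e1, e2] := coe_basisOfLinearIndependentOfCardEqFinrank _ _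
  have hsum := bas.sum_repr w
  refine ⟨bas.repr w 0, bas.repr w 1, ?_⟩
  have hb0 : bas 0 = e1 := by have := congrFun hb 0; simpa using this
  have hb1 : bas 1 = e2 := by have := congrFun hb 1; simpa using this
  have hsum2 : bas.repr w 0 • bas 0 + bas.repr w 1 • bas 1 = w := by
    simpa only [Fin.sum_univ_two] using hsum
  rw [← hb0, ← hb1]
  exact hsum2.symm


private lemma tangent_inner_eq_zero (S : Sphere (EuclideanSpace ℝ (Fin 2)))
    {L : AffineSubspace ℝ (EuclideanSpace ℝ (Fin 2))} {p q P X : EuclideanSpace ℝ (Fin 2)}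
    (hpq : p ≠ q) (hL : L = line[ℝ, p, q]) (ht : IsTangentAt S L P) (hX : X ∈ L) :
    ⟪X - P, P - S.center⟫ = (0:ℝ) := by
  obtain ⟨hPS, hPL, huniq⟩ := ht
  have hd0 : q - p ≠ 0 := sub_ne_zero.2 hpq.symm
  rw [hL, mem_line_iff'] at hPL hX
  obtain ⟨r0, hr0⟩ := hPL
  obtain ⟨r1, hr1⟩ := hX
  have hXP : X - P = (r1 - r0) • (q - p) := by rw [sub_smul, ← hr0, ← hr1]; abel
  set O := S.center with hO
  have hκ0 : ⟪q - p, P - O⟫ = (0:ℝ) := by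
    by_contra hκne
    obtain ⟨κ, hκ⟩ : ∃ κ : ℝ, κ = ⟪q - p, P - O⟫ := ⟨_, rfl⟩
    rw [← hκ] at hκne
    obtain ⟨dd, hdd⟩ : ∃ dd : ℝ, dd = ⟪q - p, q - p⟫ := ⟨_, rfl⟩
    have hddne : dd ≠ 0 := by
      rw [hdd]
      exact fun h => hd0 (inner_self_eq_zero.1 h)
    obtain ⟨τ, hτ⟩ : ∃ τ : ℝ, τ = -2 * κ / dd := ⟨_, rfl⟩
    have hY : (τ • (q - p) + P) ∈ S := by
      rw [EuclideanGeometry.mem_sphere] at hPS ⊢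
      rw [← hPS, dist_eq_norm, dist_eq_norm]
      apply norm_eq_of_inner_self_eq
      have hsplit : τ • (q - p) + P - O = τ • (q - p) + (P - O) := by abel
      rw [hsplit, real_inner_add_add_self, real_inner_smul_left, real_inner_smul_right,
        real_inner_smul_left, ← hκ, ← hdd]
      have hscal : τ * dd = -2 * κ := by rw [hτ]; field_simp
      linear_combination τ * hscal
    have hYL : (τ • (q - p) + P) ∈ L := by
      rw [hL, mem_line_iff']
      exact ⟨τ + r0, by rw [add_smul, ← hr0]; abel⟩
    have hYP := huniq _ hY hYL
    have hτ0 : τ • (q - p) = 0 := by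
      have := sub_eq_zero.2 hYP
      simpa using this
    rcases smul_eq_zero.1 hτ0 with h | h
    · rw [hτ, div_eq_zero_iff] at h
      rcases h with h | h
      · apply hκne; linarith
      · exact hddne h
    · exact hd0 h
  rw [hXP, real_inner_smul_left, hκ0, mul_zero]


/-- The Miquel–Steiner point `M_A ≠ A` lies on the symmedian from `A` (the line
through `A` and `M_t`) if and only if the cevian intersection point `N_A ≠ A`
lies on the median from `A` (the line through `A` and the midpoint of `BC`). -/
theorem miquel_point_mem_symmedian_iff_cevian_point_mem_median
    (A B C B_A C_A N_A M_A M_t : EuclideanSpace ℝ (Fin 2))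
    (hABC : AffineIndependent ℝ ![A, B, C])
    (S : Sphere (EuclideanSpace ℝ (Fin 2)))
    (hS : A ∈ S ∧ B ∈ S ∧ C ∈ S)
    (hant : midpoint ℝ B C ≠ S.center)
    (lB lC : AffineSubspace ℝ (EuclideanSpace ℝ (Fin 2)))
    (hlB : (∃ p q : EuclideanSpace ℝ (Fin 2), p ≠ q ∧ lB = line[ℝ, p, q]) ∧
      IsTangentAt S lB B)
    (hlC : (∃ p q : EuclideanSpace ℝ (Fin 2), p ≠ q ∧ lC = line[ℝ, p, q]) ∧
      IsTangentAt S lC C)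
    (hMt : M_t ∈ lB ∧ M_t ∈ lC)
    (hcev : IsCevianPair A B C B_A C_A)
    (hN₁ : N_A ∈ line[ℝ, B, B_A]) (hN₂ : N_A ∈ line[ℝ, C, C_A])
    (hCBN : AffineIndependent ℝ ![C, B_A, N_A])
    (hBCN : AffineIndependent ℝ ![B, C_A, N_A])
    (hM : IsMiquelPoint A B C B_A C_A N_A M_A)
    (hMA : M_A ≠ A) (hNA : N_A ≠ A) :
    M_A ∈ line[ℝ, A, M_t] ↔ N_A ∈ line[ℝ, A, midpoint ℝ B C] := by
  obtain ⟨hBAmem, hBAne_A, hBAne_C, hCAmem, hCAne_A, hCAne_B, -⟩ := hcev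
  obtain ⟨hM1, hM2, -, -⟩ := hM
  obtain ⟨hAS, hBS, hCS⟩ := hS
  have hBA : B ≠ A := by
    have := hABC.injective.ne (show (1 : Fin 3) ≠ 0 by decide); simpa using this
  have hCA : C ≠ A := by
    have := hABC.injective.ne (show (2 : Fin 3) ≠ 0 by decide); simpa using this
  have hBC : B ≠ C := by
    have := hABC.injective.ne (show (1 : Fin 3) ≠ 2 by decide); simpa using this
  have hli : LinearIndependent ℝ ![B - A, C - A] := linIndep2 hABC
  have heq2 : ∀ α β γ δ : ℝ, α • (B-A) + β • (C-A) = γ • (B-A) + δ • (C-A) → α = γ ∧ β = δ := by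
    intro α β γ δ hEq
    have h0 : (α - γ) • (B-A) + (β - δ) • (C-A)
        = (α • (B-A) + β • (C-A)) - (γ • (B-A) + δ • (C-A)) := by module
    rw [hEq, sub_self] at h0
    obtain ⟨h1, h2⟩ := coeffs_eq_zero hli h0
    exact ⟨by linarith, by linarith⟩
  obtain ⟨a, ha_def⟩ : ∃ a : ℝ, a = ⟪B - A, B - A⟫ := ⟨_, rfl⟩
  obtain ⟨b, hb_def⟩ : ∃ b : ℝ, b = ⟪B - A, C - A⟫ := ⟨_, rfl⟩
  obtain ⟨c, hc_def⟩ : ∃ c : ℝ, c = ⟪C - A, C - A⟫ := ⟨_, rfl⟩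
  have ha0 : a ≠ 0 := by
    rw [ha_def]; exact fun h => (sub_ne_zero.2 hBA) (inner_self_eq_zero.1 h)
  have hc0 : c ≠ 0 := by
    rw [hc_def]; exact fun h => (sub_ne_zero.2 hCA) (inner_self_eq_zero.1 h)
  -- cevian parameters
  rw [mem_line_iff'] at hBAmem hCAmem
  obtain ⟨s, hs⟩ := hBAmem
  obtain ⟨t, ht⟩ := hCAmem
  have hs0 : s ≠ 0 := by
    intro h; apply hBAne_A; rw [h, zero_smul] at hs; rwa [sub_eq_zero] at hs
  have hs1 : s ≠ 1 := by
    intro h; apply hBAne_C; rw [h, one_smul] at hs; exact sub_left_inj.1 hs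
  have ht0 : t ≠ 0 := by
    intro h; apply hCAne_A; rw [h, zero_smul] at ht; rwa [sub_eq_zero] at ht
  have ht1 : t ≠ 1 := by
    intro h; apply hCAne_B; rw [h, one_smul] at ht; exact sub_left_inj.1 ht
  -- cevian intersection point
  rw [mem_line_iff'] at hN₁ hN₂
  obtain ⟨u, hu⟩ := hN₁
  obtain ⟨v, hv⟩ := hN₂
  have hNu : N_A - A = (1 - u) • (B - A) + (u * s) • (C - A) := by
    have e1 : N_A - A = (N_A - B) + (B - A) := by abel
    rw [e1, hu]
    have e2 : B_A - B = (B_A - A) - (B - A) := by abel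
    rw [e2, hs]
    module
  have hNv : N_A - A = (v * t) • (B - A) + (1 - v) • (C - A) := by
    have e1 : N_A - A = (N_A - C) + (C - A) := by abel
    rw [e1, hv]
    have e2 : C_A - C = (C_A - A) - (C - A) := by abel
    rw [e2, ht]
    module
  obtain ⟨hR1, hR2⟩ := heq2 _ _ _ _ (hNu.symm.trans hNv)
  -- M_A coordinates
  obtain ⟨x, y, hxy⟩ := span2 hli (M_A - A)
  have hxyne : ¬(x = 0 ∧ y = 0) := by
    rintro ⟨h1, h2⟩
    apply hMA
    rw [h1, h2] at hxy
    simp only [zero_smul, add_zero] at hxy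
    exact sub_eq_zero.1 hxy
  -- circle 1 : A, B, B_A, M_A
  obtain ⟨O₁, r₁, hO₁⟩ := hM1
  obtain ⟨γ₁, δ₁, hw1⟩ := span2 hli (O₁ - A)
  have hAO1 : A - O₁ = (-γ₁) • (B - A) + (-δ₁) • (C - A) := by
    have e : A - O₁ = -(O₁ - A) := by abel
    rw [e, hw1]; module
  have hBO1 : B - O₁ = (1-γ₁) • (B - A) + (-δ₁) • (C - A) := by
    have e : B - O₁ = (B - A) - (O₁ - A) := by abel
    rw [e, hw1]; module
  have hBAO1 : B_A - O₁ = (-γ₁) • (B - A) + (s-δ₁) • (C - A) := by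
    have e : B_A - O₁ = (B_A - A) - (O₁ - A) := by abel
    rw [e, hs, hw1]; module
  have hMO1 : M_A - O₁ = (x-γ₁) • (B - A) + (y-δ₁) • (C - A) := by
    have e : M_A - O₁ = (M_A - A) - (O₁ - A) := by abel
    rw [e, hxy, hw1]; module
  have G1 : a = 2*(γ₁*a + δ₁*b) := by
    have h := inner_self_eq_of_dist_eq
      ((hO₁ A (by simp)).trans (hO₁ B (by simp)).symm)
    rw [hAO1, hBO1, inner_combo, inner_combo, ← ha_def, ← hb_def, ← hc_def] at h
    linear_combination -h
  have G2 : s*(s*c) = s*(2*(γ₁*b + δ₁*c)) := by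
    have h := inner_self_eq_of_dist_eq
      ((hO₁ A (by simp)).trans (hO₁ B_A (by simp)).symm)
    rw [hAO1, hBAO1, inner_combo, inner_combo, ← ha_def, ← hb_def, ← hc_def] at h
    linear_combination -h
  have G2' : s*c = 2*(γ₁*b + δ₁*c) := mul_left_cancel₀ hs0 G2
  have G3 : x*x*a + 2*x*y*b + y*y*c = 2*(x*(γ₁*a + δ₁*b) + y*(γ₁*b + δ₁*c)) := by
    have h := inner_self_eq_of_dist_eq
      ((hO₁ A (by simp)).trans (hO₁ M_A (by simp)).symm)
    rw [hAO1, hMO1, inner_combo, inner_combo, ← ha_def, ← hb_def, ← hc_def] at h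
    linear_combination -h
  -- circle 2 : A, C, C_A, M_A
  obtain ⟨O₂, r₂, hO₂⟩ := hM2
  obtain ⟨γ₂, δ₂, hw2⟩ := span2 hli (O₂ - A)
  have hAO2 : A - O₂ = (-γ₂) • (B - A) + (-δ₂) • (C - A) := by
    have e : A - O₂ = -(O₂ - A) := by abel
    rw [e, hw2]; module
  have hCO2 : C - O₂ = (-γ₂) • (B - A) + (1-δ₂) • (C - A) := by
    have e : C - O₂ = (C - A) - (O₂ - A) := by abel
    rw [e, hw2]; module
  have hCAO2 : C_A - O₂ = (t-γ₂) • (B - A) + (-δ₂) • (C - A) := by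
    have e : C_A - O₂ = (C_A - A) - (O₂ - A) := by abel
    rw [e, ht, hw2]; module
  have hMO2 : M_A - O₂ = (x-γ₂) • (B - A) + (y-δ₂) • (C - A) := by
    have e : M_A - O₂ = (M_A - A) - (O₂ - A) := by abel
    rw [e, hxy, hw2]; module
  have H1 : c = 2*(γ₂*b + δ₂*c) := by
    have h := inner_self_eq_of_dist_eq
      ((hO₂ A (by simp)).trans (hO₂ C (by simp)).symm)
    rw [hAO2, hCO2, inner_combo, inner_combo, ← ha_def, ← hb_def, ← hc_def] at h
    linear_combination -h
  have H2 : t*(t*a) = t*(2*(γ₂*a + δ₂*b)) := by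
    have h := inner_self_eq_of_dist_eq
      ((hO₂ A (by simp)).trans (hO₂ C_A (by simp)).symm)
    rw [hAO2, hCAO2, inner_combo, inner_combo, ← ha_def, ← hb_def, ← hc_def] at h
    linear_combination -h
  have H2' : t*a = 2*(γ₂*a + δ₂*b) := mul_left_cancel₀ ht0 H2
  have H3 : x*x*a + 2*x*y*b + y*y*c = 2*(x*(γ₂*a + δ₂*b) + y*(γ₂*b + δ₂*c)) := by
    have h := inner_self_eq_of_dist_eq
      ((hO₂ A (by simp)).trans (hO₂ M_A (by simp)).symm)
    rw [hAO2, hMO2, inner_combo, inner_combo, ← ha_def, ← hb_def, ← hc_def] at h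
    linear_combination -h
  -- the key circle relation
  have hKey : x*a*(1-t) = y*c*(1-s) := by
    linear_combination (H3 - G3) + x*G1 + y*G2' - x*H2' - y*H1
  -- the circumsphere
  obtain ⟨ω₁, ω₂, hw⟩ := span2 hli (S.center - A)
  have hAO : A - S.center = (-ω₁) • (B - A) + (-ω₂) • (C - A) := by
    have e : A - S.center = -(S.center - A) := by abel
    rw [e, hw]; module
  have hBO : B - S.center = (1-ω₁) • (B - A) + (-ω₂) • (C - A) := by
    have e : B - S.center = (B - A) - (S.center - A) := by abel
    rw [e, hw]; module
  have hCO : C - S.center = (-ω₁) • (B - A) + (1-ω₂) • (C - A) := by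
    have e : C - S.center = (C - A) - (S.center - A) := by abel
    rw [e, hw]; module
  have P1 : a = 2*(ω₁*a + ω₂*b) := by
    have h := inner_self_eq_of_dist_eq
      ((EuclideanGeometry.mem_sphere.1 hAS).trans (EuclideanGeometry.mem_sphere.1 hBS).symm)
    rw [hAO, hBO, inner_combo, inner_combo, ← ha_def, ← hb_def, ← hc_def] at h
    linear_combination -h
  have P2 : c = 2*(ω₁*b + ω₂*c) := by
    have h := inner_self_eq_of_dist_eq
      ((EuclideanGeometry.mem_sphere.1 hAS).trans (EuclideanGeometry.mem_sphere.1 hCS).symm)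
    rw [hAO, hCO, inner_combo, inner_combo, ← ha_def, ← hb_def, ← hc_def] at h
    linear_combination -h
  have hmid : midpoint ℝ B C - A = (1/2 : ℝ) • (B - A) + (1/2 : ℝ) • (C - A) := by
    rw [midpoint_eq_smul_add, invOf_eq_inv]
    module
  -- B and C not antipodal means b ≠ 0
  have hb0 : b ≠ 0 := by
    intro hb
    apply hant
    rw [hb] at P1 P2
    have h1 : a*(1 - 2*ω₁) = 0 := by linear_combination P1
    have h2 : c*(1 - 2*ω₂) = 0 := by linear_combination P2
    have hω1 : ω₁ = 1/2 := by
      have := (mul_eq_zero.1 h1).resolve_left ha0; linarith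
    have hω2 : ω₂ = 1/2 := by
      have := (mul_eq_zero.1 h2).resolve_left hc0; linarith
    have : midpoint ℝ B C - A = S.center - A := by
      rw [hmid, hw, hω1, hω2]
    exact sub_left_inj.1 this
  -- |B - C|² ≠ 0
  have habc0 : a - 2*b + c ≠ 0 := by
    have hBCv : B - C = (1:ℝ) • (B - A) + (-1:ℝ) • (C - A) := by module
    have hval : ⟪B - C, B - C⟫ = a - 2*b + c := by
      rw [hBCv, inner_combo, ← ha_def, ← hb_def, ← hc_def]; ring
    intro h0
    exact (sub_ne_zero.2 hBC) (inner_self_eq_zero.1 (by rw [hval, h0]))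
  -- tangent lines
  obtain ⟨⟨pB, qB, hpqB, hlBeq⟩, htB⟩ := hlB
  obtain ⟨⟨pC, qC, hpqC, hlCeq⟩, htC⟩ := hlC
  have T1v := tangent_inner_eq_zero S hpqB hlBeq htB hMt.1
  have T2v := tangent_inner_eq_zero S hpqC hlCeq htC hMt.2
  obtain ⟨m, n, hmn⟩ := span2 hli (M_t - A)
  have hMtB : M_t - B = (m-1) • (B - A) + n • (C - A) := by
    have e : M_t - B = (M_t - A) - (B - A) := by abel
    rw [e, hmn]; module
  have hMtC : M_t - C = m • (B - A) + (n-1) • (C - A) := by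
    have e : M_t - C = (M_t - A) - (C - A) := by abel
    rw [e, hmn]; module
  rw [hMtB, hBO, inner_combo, ← ha_def, ← hb_def, ← hc_def] at T1v
  rw [hMtC, hCO, inner_combo, ← ha_def, ← hb_def, ← hc_def] at T2v
  -- the symmedian point coordinates
  have h2bm : 2*b*m = c := by
    have key : (a - 2*b + c)*(2*b*m - c) = 0 := by
      linear_combination 2*c*T1v - 2*(2*b-c)*T2v - (c*(m-1)-(2*b-c)*m)*P1 - (c*n-(2*b-c)*(n-1))*P2
    have := (mul_eq_zero.1 key).resolve_left habc0
    linarith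
  have h2bn : 2*b*n = a := by
    have key : (a - 2*b + c)*(2*b*n - a) = 0 := by
      linear_combination 2*a*T2v - 2*(2*b-a)*T1v - (a*m-(2*b-a)*(m-1))*P1 - (a*(n-1)-(2*b-a)*n)*P2
    have := (mul_eq_zero.1 key).resolve_left habc0
    linarith
  -- main equivalence
  rw [mem_line_iff' A M_t M_A, mem_line_iff' A (midpoint ℝ B C) N_A]
  constructor
  · rintro ⟨r, hr⟩
    have hcoords : M_A - A = (r*m) • (B - A) + (r*n) • (C - A) := by
      rw [hr, hmn]; module
    obtain ⟨hxm, hyn⟩ := heq2 _ _ _ _ (hxy.symm.trans hcoords)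
    have hxayc : x*a = y*c := by
      have h2 : 2*b*(x*a - y*c) = 0 := by
        linear_combination (2*b*a)*hxm - (2*b*c)*hyn + (r*a)*h2bm - (r*c)*h2bn
      have := (mul_eq_zero.1 h2).resolve_left (mul_ne_zero two_ne_zero hb0)
      linarith
    have hx0 : x ≠ 0 := by
      intro h0
      apply hxyne
      refine ⟨h0, ?_⟩
      have hyc : y*c = 0 := by rw [← hxayc, h0]; ring
      exact (mul_eq_zero.1 hyc).resolve_right hc0
    have hst : s = t := by
      have key : x*a*(s - t) = 0 := by linear_combination hKey - (1-s)*hxayc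
      have h1 := (mul_eq_zero.1 key).resolve_left (mul_ne_zero hx0 ha0)
      linarith
    have hR1' : 1 - u = v * s := by rw [hst]; exact hR1
    have key2 : (1-s)*(1-u*(1+s)) = 0 := by linear_combination hR1' + s*hR2
    have h3 := (mul_eq_zero.1 key2).resolve_left (sub_ne_zero.2 (Ne.symm hs1))
    have husm : 1 - u = u * s := by linear_combination h3
    refine ⟨2*(u*s), ?_⟩
    have hexp : (2*(u*s)) • ((1/2 : ℝ) • (B - A) + (1/2 : ℝ) • (C - A))
        = (u*s) • (B - A) + (u*s) • (C - A) := by module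
    rw [hNu, hmid, hexp, husm]
  · rintro ⟨r, hr⟩
    have hcoords : N_A - A = (r*(1/2)) • (B - A) + (r*(1/2)) • (C - A) := by
      rw [hr, hmid]; module
    obtain ⟨hα, hβ⟩ := heq2 _ _ _ _ (hNu.symm.trans hcoords)
    have husm : 1 - u = u * s := by rw [hα, hβ]
    have hv : v = u := by linear_combination hR2 + husm
    have hu0 : u ≠ 0 := by
      intro h0; rw [h0] at husm; norm_num at husm
    have hst : s = t := by
      apply mul_left_cancel₀ hu0
      linear_combination -husm + hR1 + t*hv
    have hxayc : x*a = y*c := by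
      rw [← hst] at hKey
      have key : (1-s)*(x*a - y*c) = 0 := by linear_combination hKey
      have := (mul_eq_zero.1 key).resolve_left (sub_ne_zero.2 (Ne.symm hs1))
      linarith
    refine ⟨2*b*y/a, ?_⟩
    have hxm : (2*b*y/a) * m = x := by
      field_simp
      linear_combination y*h2bm - hxayc
    have hyn : (2*b*y/a) * n = y := by
      field_simp
      linear_combination y*h2bn
    have hexp : (2*b*y/a) • (m • (B - A) + n • (C - A))
        = ((2*b*y/a)*m) • (B - A) + ((2*b*y/a)*n) • (C - A) := by module
    rw [hxy, hmn, hexp, hxm, hyn]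
end

section
/- Let ABC be a triangle with incenter I, and let (B_A, C_A) be a cevian pair from A whose Miquel–Steiner point M_A equals I. Then dist(B, C_A) = dist(B, C) and dist(C, B_A) = dist(B, C). -/
open EuclideanGeometry

section Aux

open Metric

local notation "⟪" x ", " y "⟫" => @inner ℝ _ _ x y

set_option maxHeartbeats 1000000

variable {E : Type*} [NormedAddCommGroup E] [InnerProductSpace ℝ E]

/-- Formula for the squared distance from a point to a line through two points. -/
lemma infDist_line_sq (X P Q : E) (h : Q ≠ P) :
    Metric.infDist X (line[ℝ, P, Q] : Set E) ^ 2 * ‖Q - P‖ ^ 2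
      = ‖X - P‖ ^ 2 * ‖Q - P‖ ^ 2 - ⟪Q - P, X - P⟫ ^ 2 := by
  set u := Q - P with hu_def
  have hu : u ≠ 0 := sub_ne_zero.mpr h
  have hu2 : (0:ℝ) < ‖u‖ ^ 2 := by
    have := norm_pos_iff.mpr hu
    positivity
  set w := X - P with hw_def
  set t : ℝ := ⟪u, w⟫ / ‖u‖ ^ 2 with ht_def
  set F : E := t • u + P with hF_def
  have hFmem : F ∈ (line[ℝ, P, Q] : Set E) := by
    have h0 := smul_vsub_vadd_mem_affineSpan_pair (k := ℝ) t P Q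
    simpa [vsub_eq_sub, vadd_eq_add, hF_def, hu_def] using h0
  have hXF : X - F = w - t • u := by
    simp only [hF_def, hw_def]
    abel
  have hdF : dist X F ^ 2 = ‖w‖ ^ 2 - ⟪u, w⟫ ^ 2 / ‖u‖ ^ 2 := by
    rw [dist_eq_norm, hXF, norm_sub_sq_real, real_inner_smul_right, norm_smul,
      Real.norm_eq_abs, mul_pow, sq_abs, ht_def, real_inner_comm w u]
    field_simp
    ring
  have hle : ∀ y ∈ (line[ℝ, P, Q] : Set E), dist X F ≤ dist X y := by
    intro y hy
    have hy' : (y -ᵥ P) +ᵥ P ∈ line[ℝ, P, Q] := by simpa using hy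
    obtain ⟨r, hr⟩ := vadd_left_mem_affineSpan_pair.mp hy'
    have hyr : y = r • u + P := by
      have : r • u = y - P := by simpa [vsub_eq_sub, hu_def] using hr
      rw [this]; abel
    have hXy : X - y = w - r • u := by rw [hyr, hw_def]; abel
    have hdy : dist X y ^ 2 = ‖w‖ ^ 2 - 2 * r * ⟪u, w⟫ + r ^ 2 * ‖u‖ ^ 2 := by
      rw [dist_eq_norm, hXy, norm_sub_sq_real, real_inner_smul_right, norm_smul,
        Real.norm_eq_abs, mul_pow, sq_abs, real_inner_comm w u]
      ring
    have hsq : dist X F ^ 2 ≤ dist X y ^ 2 := by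
      rw [hdF, hdy]
      have h1 : (0:ℝ) ≤ (r * ‖u‖ ^ 2 - ⟪u, w⟫) ^ 2 / ‖u‖ ^ 2 := by positivity
      have h2 : (r * ‖u‖ ^ 2 - ⟪u, w⟫) ^ 2 / ‖u‖ ^ 2
          = (‖w‖ ^ 2 - 2 * r * ⟪u, w⟫ + r ^ 2 * ‖u‖ ^ 2) - (‖w‖ ^ 2 - ⟪u, w⟫ ^ 2 / ‖u‖ ^ 2) := by
        field_simp
        ring
      linarith [h2 ▸ h1]
    calc dist X F = Real.sqrt (dist X F ^ 2) := (Real.sqrt_sq dist_nonneg).symm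
      _ ≤ Real.sqrt (dist X y ^ 2) := Real.sqrt_le_sqrt hsq
      _ = dist X y := Real.sqrt_sq dist_nonneg
  have hinf : Metric.infDist X (line[ℝ, P, Q] : Set E) = dist X F := by
    refine le_antisymm (Metric.infDist_le_dist_of_mem hFmem) ?_
    rw [Metric.infDist_eq_iInf]
    haveI : Nonempty (line[ℝ, P, Q] : Set E) :=
      ⟨⟨P, left_mem_affineSpan_pair ℝ P Q⟩⟩
    exact le_ciInf fun y => hle y y.2
  rw [hinf, hdF]
  field_simp

lemma expand_inner (u v : E) (p q r s : ℝ) :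
    ⟪p • u + q • v, r • u + s • v⟫
      = p * r * ⟪u, u⟫ + (p * s + q * r) * ⟪u, v⟫ + q * s * ⟪v, v⟫ := by
  rw [inner_add_left, inner_add_right, inner_add_right, real_inner_smul_left,
    real_inner_smul_left, real_inner_smul_left, real_inner_smul_left,
    real_inner_smul_right, real_inner_smul_right, real_inner_smul_right,
    real_inner_smul_right, real_inner_comm v u]
  ring

/-- A point equidistant from the three sides of a triangle and inside it is the incenter,
expressed in barycentric form. -/
lemma incenter_formula (A B C I : EuclideanSpace ℝ (Fin 2))
    (hABC : AffineIndependent ℝ ![A, B, C])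
    (hI₁ : Metric.infDist I (line[ℝ, B, C] : Set (EuclideanSpace ℝ (Fin 2))) =
      Metric.infDist I (line[ℝ, C, A] : Set (EuclideanSpace ℝ (Fin 2))))
    (hI₂ : Metric.infDist I (line[ℝ, C, A] : Set (EuclideanSpace ℝ (Fin 2))) =
      Metric.infDist I (line[ℝ, A, B] : Set (EuclideanSpace ℝ (Fin 2))))
    (hI₃ : I ∈ interior (convexHull ℝ ({A, B, C} : Set (EuclideanSpace ℝ (Fin 2))))) :
    (dist B C + dist C A + dist A B) • I
      = dist B C • A + dist C A • B + dist A B • C := by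
  have hne01 : A ≠ B := by
    have h := hABC.injective.ne (show (0 : Fin 3) ≠ 1 by decide)
    simpa using h
  have hne02 : A ≠ C := by
    have h := hABC.injective.ne (show (0 : Fin 3) ≠ 2 by decide)
    simpa using h
  have hne12 : B ≠ C := by
    have h := hABC.injective.ne (show (1 : Fin 3) ≠ 2 by decide)
    simpa using h
  set a := dist B C with ha_def
  set b := dist C A with hb_def
  set c := dist A B with hc_def
  have ha : 0 < a := dist_pos.mpr hne12
  have hb : 0 < b := dist_pos.mpr hne02.symm
  have hc : 0 < c := dist_pos.mpr hne01
  -- the affine basis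
  have htot : affineSpan ℝ (Set.range ![A, B, C]) = ⊤ := by
    rw [hABC.affineSpan_eq_top_iff_card_eq_finrank_add_one]
    simp
  let b3 : AffineBasis (Fin 3) ℝ (EuclideanSpace ℝ (Fin 2)) := ⟨![A, B, C], hABC, htot⟩
  set α := b3.coord 0 I with hα_def
  set β := b3.coord 1 I with hβ_def
  set γ := b3.coord 2 I with hγ_def
  have hsum : α + β + γ = 1 := by
    have h := b3.sum_coord_apply_eq_one I
    rwa [Fin.sum_univ_three] at h
  have hcomb : α • A + β • B + γ • C = I := by
    have h := b3.linear_combination_coord_eq_self I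
    rwa [Fin.sum_univ_three, show b3 0 = A from rfl, show b3 1 = B from rfl,
      show b3 2 = C from rfl] at h
  -- positivity of the coordinates
  have hrange : Set.range ⇑b3 = ({A, B, C} : Set (EuclideanSpace ℝ (Fin 2))) := by
    show Set.range ![A, B, C] = _
    ext z
    simp only [Set.mem_range, Set.mem_insert_iff, Set.mem_singleton_iff]
    constructor
    · rintro ⟨i, rfl⟩
      fin_cases i <;> simp
    · rintro (rfl | rfl | rfl)
      exacts [⟨0, rfl⟩, ⟨1, rfl⟩, ⟨2, rfl⟩]
  have hposall : ∀ i, 0 < b3.coord i I := by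
    have h := b3.interior_convexHull
    rw [hrange] at h
    rw [h] at hI₃
    exact hI₃
  have hαpos : 0 < α := hposall 0
  have hβpos : 0 < β := hposall 1
  have hγpos : 0 < γ := hposall 2
  -- vector decompositions
  have hvecI : I - B = α • (A - B) + γ • (C - B) := by
    have hβ1 : β = 1 - α - γ := by linarith
    rw [← hcomb, hβ1]
    module
  have hvecIC : I - C = α • (A - B) + (γ - 1) • (C - B) := by
    rw [show I - C = (I - B) - (C - B) by abel, hvecI]
    module
  have hvecIA : I - A = (α - 1) • (A - B) + γ • (C - B) := by
    rw [show I - A = (I - B) - (A - B) by abel, hvecI]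
    module
  have hAC' : A - C = (1 : ℝ) • (A - B) + (-1 : ℝ) • (C - B) := by module
  have hBA' : B - A = (-1 : ℝ) • (A - B) + (0 : ℝ) • (C - B) := by module
  have hCB' : C - B = (0 : ℝ) • (A - B) + (1 : ℝ) • (C - B) := by module
  -- squared side lengths as inner products
  have hc2 : ⟪A - B, A - B⟫ = c ^ 2 := by
    rw [real_inner_self_eq_norm_sq, ← dist_eq_norm]
  have ha2 : ⟪C - B, C - B⟫ = a ^ 2 := by
    rw [real_inner_self_eq_norm_sq, ← dist_eq_norm, dist_comm]
  have hb2 : b ^ 2 = ⟪A - B, A - B⟫ - 2 * ⟪A - B, C - B⟫ + ⟪C - B, C - B⟫ := by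
    have h := norm_sub_sq_real (A - B) (C - B)
    rw [show (A - B) - (C - B) = A - C by abel, ← real_inner_self_eq_norm_sq (A - B),
      ← real_inner_self_eq_norm_sq (C - B)] at h
    rw [hb_def, dist_eq_norm, norm_sub_rev]
    exact h
  -- strict Cauchy-Schwarz : G ≠ 0
  have hvne : ‖C - B‖ ≠ 0 := by
    simp only [norm_ne_zero_iff, sub_ne_zero]
    exact hne12.symm
  have hG0 : ⟪A - B, A - B⟫ * ⟪C - B, C - B⟫ - ⟪A - B, C - B⟫ ^ 2 ≠ 0 := by
    intro hGeq
    have hksq : ⟪A - B, C - B⟫ ^ 2 = (‖A - B‖ * ‖C - B‖) ^ 2 := by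
      rw [real_inner_self_eq_norm_sq, real_inner_self_eq_norm_sq] at hGeq
      linear_combination (-1 : ℝ) * hGeq
    have hcases : ⟪A - B, C - B⟫ = ‖A - B‖ * ‖C - B‖ ∨
        ⟪A - B, C - B⟫ = -(‖A - B‖ * ‖C - B‖) := sq_eq_sq_iff_eq_or_eq_neg.mp hksq
    have hdep : ∃ t : ℝ, ‖C - B‖ • (A - B) = t • (C - B) := by
      rcases hcases with h | h
      · refine ⟨‖A - B‖, ?_⟩
        by_contra hne
        have := inner_lt_norm_mul_iff_real.mpr hne
        linarith
      · refine ⟨-‖A - B‖, ?_⟩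
        have h' : ⟪A - B, -(C - B)⟫ = ‖A - B‖ * ‖-(C - B)‖ := by
          rw [inner_neg_right, norm_neg]
          linarith
        have heq : ‖-(C - B)‖ • (A - B) = ‖A - B‖ • (-(C - B)) := by
          by_contra hne
          have := inner_lt_norm_mul_iff_real.mpr hne
          linarith
        rw [norm_neg, smul_neg] at heq
        rw [heq, neg_smul]
    obtain ⟨t, ht⟩ := hdep
    have hAB : A - B = (t / ‖C - B‖) • (C - B) := by
      calc A - B = ‖C - B‖⁻¹ • (‖C - B‖ • (A - B)) := (inv_smul_smul₀ hvne _).symm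
        _ = ‖C - B‖⁻¹ • (t • (C - B)) := by rw [ht]
        _ = (t / ‖C - B‖) • (C - B) := by rw [div_eq_inv_mul, mul_smul]
    have hcol : Collinear ℝ ({A, B, C} : Set (EuclideanSpace ℝ (Fin 2))) := by
      rw [collinear_iff_of_mem (show B ∈ ({A, B, C} : Set (EuclideanSpace ℝ (Fin 2))) from
        Set.mem_insert_of_mem _ (Set.mem_insert _ _))]
      refine ⟨C - B, fun p hp => ?_⟩
      simp only [Set.mem_insert_iff, Set.mem_singleton_iff] at hp
      rcases hp with rfl | rfl | rfl
      · exact ⟨t / ‖C - B‖, by rw [vadd_eq_add, ← hAB]; abel⟩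
      · exact ⟨0, by simp⟩
      · exact ⟨1, by simp⟩
    exact affineIndependent_iff_not_collinear_set.mp hABC hcol
  -- the three distance equations
  have h01 := infDist_line_sq I B C hne12.symm
  rw [hI₁, hI₂] at h01
  rw [← real_inner_self_eq_norm_sq (C - B), ← real_inner_self_eq_norm_sq (I - B)] at h01
  rw [hCB', hvecI] at h01
  simp only [expand_inner] at h01
  have h02 := infDist_line_sq I C A hne02
  rw [hI₂] at h02
  rw [← real_inner_self_eq_norm_sq (A - C), ← real_inner_self_eq_norm_sq (I - C)] at h02
  rw [hAC', hvecIC] at h02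
  simp only [expand_inner] at h02
  have h03 := infDist_line_sq I A B hne01.symm
  rw [← real_inner_self_eq_norm_sq (B - A), ← real_inner_self_eq_norm_sq (I - A)] at h03
  rw [hBA', hvecIA] at h03
  simp only [expand_inner] at h03
  set c2 := ⟪A - B, A - B⟫ with hc2_def
  set a2 := ⟪C - B, C - B⟫ with ha2_def
  set k := ⟪A - B, C - B⟫ with hk_def
  set D := Metric.infDist I (line[ℝ, A, B] : Set (EuclideanSpace ℝ (Fin 2))) with hD_def
  set G := c2 * a2 - k ^ 2 with hG_def
  have hβ1 : β = 1 - α - γ := by linarith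
  have h1' : D ^ 2 * a ^ 2 = α ^ 2 * G := by
    rw [← ha2]
    linear_combination h01
  have h2' : D ^ 2 * b ^ 2 = β ^ 2 * G := by
    rw [hb2, hβ1]
    linear_combination h02
  have h3' : D ^ 2 * c ^ 2 = γ ^ 2 * G := by
    rw [← hc2]
    linear_combination h03
  -- deduce the barycentric ratios
  have hab : α * b = β * a := by
    have hsq : (α ^ 2 * b ^ 2) * G = (β ^ 2 * a ^ 2) * G := by
      linear_combination (-(b ^ 2)) * h1' + a ^ 2 * h2'
    have hsq' : α ^ 2 * b ^ 2 = β ^ 2 * a ^ 2 := mul_right_cancel₀ hG0 hsq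
    have hf : (α * b - β * a) * (α * b + β * a) = 0 := by linear_combination hsq'
    rcases mul_eq_zero.mp hf with h | h
    · linarith [sub_eq_zero.mp h]
    · exfalso
      have h1 : 0 < α * b := mul_pos hαpos hb
      have h2 : 0 < β * a := mul_pos hβpos ha
      linarith
  have hbc : β * c = γ * b := by
    have hsq : (β ^ 2 * c ^ 2) * G = (γ ^ 2 * b ^ 2) * G := by
      linear_combination (-(c ^ 2)) * h2' + b ^ 2 * h3'
    have hsq' : β ^ 2 * c ^ 2 = γ ^ 2 * b ^ 2 := mul_right_cancel₀ hG0 hsq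
    have hf : (β * c - γ * b) * (β * c + γ * b) = 0 := by linear_combination hsq'
    rcases mul_eq_zero.mp hf with h | h
    · linarith [sub_eq_zero.mp h]
    · exfalso
      have h1 : 0 < β * c := mul_pos hβpos hc
      have h2 : 0 < γ * b := mul_pos hγpos hb
      linarith
  have hpβ : (a + b + c) * β = b := by linear_combination b * hsum - hab + hbc
  have hpα : (a + b + c) * α = a :=
    mul_right_cancel₀ hb.ne' (by linear_combination (a + b + c) * hab + a * hpβ)
  have hpγ : (a + b + c) * γ = c :=
    mul_right_cancel₀ hb.ne' (by linear_combination (-(a + b + c)) * hbc + c * hpβ)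
  rw [← hcomb]
  have hmod : (a + b + c) • (α • A + β • B + γ • C)
      = ((a + b + c) * α) • A + ((a + b + c) * β) • B + ((a + b + c) * γ) • C := by
    module
  rw [hmod, hpα, hpβ, hpγ]

/-- Key circle lemma. -/
lemma key_lemma {A B C X I O : E}
    (ha : 0 < dist B C) (hb : 0 < dist C A) (hc : 0 < dist A B)
    (hI : (dist B C + dist C A + dist A B) • (I - B)
        = dist B C • (A - B) + dist A B • (C - B))
    (hX : X ∈ line[ℝ, A, B]) (hXA : X ≠ A)
    (h1 : dist A O = dist I O) (h2 : dist C O = dist I O) (h3 : dist X O = dist I O) :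
    dist B X = dist B C := by
  set a := dist B C with ha_def
  set b := dist C A with hb_def
  set c := dist A B with hc_def
  set u := A - B with hu_def
  set v := C - B with hv_def
  set w := I - B with hw_def
  set x := O - B with hx_def
  have hcu : ‖u‖ = c := by rw [hc_def, dist_eq_norm, hu_def]
  have hav : ‖v‖ = a := by rw [ha_def, dist_comm, dist_eq_norm, hv_def]
  have hbuv : ‖v - u‖ = b := by
    rw [hb_def, dist_eq_norm, hv_def, hu_def]
    congr 1
    abel
  -- write X - B = σ • u
  obtain ⟨r, hr⟩ : ∃ r : ℝ, r • (B - A) = X - A := by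
    have hy' : (X -ᵥ A) +ᵥ A ∈ line[ℝ, A, B] := by simpa using hX
    obtain ⟨r, hr⟩ := vadd_left_mem_affineSpan_pair.mp hy'
    exact ⟨r, by simpa [vsub_eq_sub] using hr⟩
  set σ : ℝ := 1 - r with hσ_def
  have hXB : X - B = σ • u := by
    rw [hσ_def, hu_def, sub_smul, one_smul]
    rw [show X - B = (X - A) + (A - B) by abel, ← hr]
    rw [show r • (B - A) = -(r • (A - B)) by rw [← smul_neg]; congr 1; abel]
    abel
  have hσ1 : σ ≠ 1 := by
    intro hs
    apply hXA
    have hr0 : r = 0 := by rw [hσ_def] at hs; linarith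
    rw [hr0, zero_smul] at hr
    rw [← sub_eq_zero]
    exact hr.symm
  -- scalar abbreviations
  have hu2 : ⟪u, u⟫ = c ^ 2 := by rw [real_inner_self_eq_norm_sq, hcu]
  have hv2 : ⟪v, v⟫ = a ^ 2 := by rw [real_inner_self_eq_norm_sq, hav]
  set P1 : ℝ := ⟪u, x⟫ with hP1_def
  set Q1 : ℝ := ⟪v, x⟫ with hQ1_def
  set k : ℝ := ⟪u, v⟫ with hk_def
  set W : ℝ := ⟪w, w⟫ with hW_def
  set X1 : ℝ := ⟪w, x⟫ with hX1_def
  set p : ℝ := a + b + c with hp_def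
  have hp0 : 0 < p := by rw [hp_def]; linarith
  have hcomm : ⟪v, u⟫ = k := by rw [hk_def]; exact real_inner_comm u v
  -- law of cosines type relation
  have hk2 : 2 * k = c ^ 2 + a ^ 2 - b ^ 2 := by
    have h0 : ‖v - u‖ ^ 2 = ‖v‖ ^ 2 - 2 * ⟪v, u⟫ + ‖u‖ ^ 2 := norm_sub_sq_real v u
    rw [hbuv, hav, hcu, hcomm] at h0
    linarith
  -- relations from the incenter identity p • w = a • u + c • v
  have hvecI : p • w = a • u + c • v := hI
  have hWX : p * X1 = a * P1 + c * Q1 := by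
    have h0 : ⟪p • w, x⟫ = ⟪a • u + c • v, x⟫ := by rw [hvecI]
    rw [real_inner_smul_left, inner_add_left, real_inner_smul_left, real_inner_smul_left]
      at h0
    exact h0
  have hWW : p ^ 2 * W = a ^ 2 * c ^ 2 + 2 * a * c * k + c ^ 2 * a ^ 2 := by
    have h0 : ⟪p • w, p • w⟫ = ⟪a • u + c • v, a • u + c • v⟫ := by rw [hvecI]
    rw [real_inner_smul_left, real_inner_smul_right] at h0
    rw [inner_add_left, inner_add_right, inner_add_right, real_inner_smul_left,
      real_inner_smul_left, real_inner_smul_left, real_inner_smul_left,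
      real_inner_smul_right, real_inner_smul_right, real_inner_smul_right,
      real_inner_smul_right, hu2, hv2, hcomm] at h0
    linear_combination h0
  -- the three circle equations
  have circ : ∀ y : E, dist y O = dist I O →
      ⟪y - B, y - B⟫ - 2 * ⟪y - B, x⟫ = W - 2 * X1 := by
    intro y hy
    have h0 : ‖(y - B) - x‖ ^ 2 = ‖w - x‖ ^ 2 := by
      rw [show (y - B) - x = y - O by rw [hx_def]; abel,
        show w - x = I - O by rw [hw_def, hx_def]; abel,
        ← dist_eq_norm, ← dist_eq_norm, hy]
    rw [norm_sub_sq_real (y - B) x, norm_sub_sq_real w x] at h0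
    have hy2 : ‖y - B‖ ^ 2 = ⟪y - B, y - B⟫ := (real_inner_self_eq_norm_sq _).symm
    have hw2 : ‖w‖ ^ 2 = W := by rw [hW_def, real_inner_self_eq_norm_sq]
    rw [hy2, hw2] at h0
    linarith
  have e1 : c ^ 2 - 2 * P1 = W - 2 * X1 := by
    have h0 := circ A h1
    rw [← hu_def] at h0
    rw [hu2] at h0
    exact h0
  have e2 : a ^ 2 - 2 * Q1 = W - 2 * X1 := by
    have h0 := circ C h2
    rw [← hv_def] at h0
    rw [hv2] at h0
    exact h0
  have e3 : σ ^ 2 * c ^ 2 - 2 * (σ * P1) = W - 2 * X1 := by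
    have h0 := circ X h3
    rw [hXB] at h0
    rw [real_inner_smul_left, real_inner_smul_right, real_inner_smul_left, hu2] at h0
    linear_combination h0
  -- derive 2 P1 = (σ + 1) c²
  have hP : 2 * P1 = (σ + 1) * c ^ 2 := by
    have h31 : (σ - 1) * ((σ + 1) * c ^ 2 - 2 * P1) = 0 := by linear_combination e3 - e1
    rcases mul_eq_zero.mp h31 with h | h
    · exact absurd (by linarith [sub_eq_zero.mp h] : σ = 1) hσ1
    · linarith
  have hQ : 2 * Q1 = a ^ 2 + σ * c ^ 2 := by linear_combination e1 - e2 + hP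
  -- the master equation
  have hE : p ^ 2 * c ^ 2 - 2 * (p ^ 2 * P1)
      = 2 * a ^ 2 * c ^ 2 + 2 * a * c * k - 2 * (p * (a * P1 + c * Q1)) := by
    linear_combination p ^ 2 * e1 + hWW - 2 * p * hWX
  have hkey : (σ * c - a) * (p * c * b) = 0 := by
    linear_combination (-1 : ℝ) * hE - (p ^ 2 - p * a) * hP + p * c * hQ - a * c * hk2
  have hσc : σ * c = a := by
    rcases mul_eq_zero.mp hkey with h | h
    · linarith [sub_eq_zero.mp h]
    · exfalso
      have h0 : 0 < p * c * b := by positivity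
      linarith
  have hσpos : 0 < σ := by
    rcases lt_or_ge 0 σ with h | h
    · exact h
    · exfalso
      nlinarith
  rw [dist_comm, dist_eq_norm, hXB, norm_smul, Real.norm_eq_abs, abs_of_pos hσpos, hcu, hσc]

end Aux

/-- If the Miquel–Steiner point of a cevian pair `(B_A, C_A)` from `A` is the
incenter `I` of triangle `ABC` (the point inside the triangle equidistant from the
three sides), then `dist B C_A = dist B C` and `dist C B_A = dist B C`. -/

theorem cevian_lengths_of_miquel_point_eq_incenter
    (A B C B_A C_A N_A I : EuclideanSpace ℝ (Fin 2))
    (hABC : AffineIndependent ℝ ![A, B, C])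
    (hI₁ : Metric.infDist I (line[ℝ, B, C] : Set (EuclideanSpace ℝ (Fin 2))) =
      Metric.infDist I (line[ℝ, C, A] : Set (EuclideanSpace ℝ (Fin 2))))
    (hI₂ : Metric.infDist I (line[ℝ, C, A] : Set (EuclideanSpace ℝ (Fin 2))) =
      Metric.infDist I (line[ℝ, A, B] : Set (EuclideanSpace ℝ (Fin 2))))
    (hI₃ : I ∈ interior (convexHull ℝ ({A, B, C} : Set (EuclideanSpace ℝ (Fin 2)))))
    (hcev : IsCevianPair A B C B_A C_A)
    (hN₁ : N_A ∈ line[ℝ, B, B_A]) (hN₂ : N_A ∈ line[ℝ, C, C_A])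
    (hCBN : AffineIndependent ℝ ![C, B_A, N_A])
    (hBCN : AffineIndependent ℝ ![B, C_A, N_A])
    (hM : IsMiquelPoint A B C B_A C_A N_A I) :
    dist B C_A = dist B C ∧ dist C B_A = dist B C := by
  obtain ⟨hBA_mem, hBAneA, hBAneC, hCA_mem, hCAneA, hCAneB, -⟩ := hcev
  have hIf := incenter_formula A B C I hABC hI₁ hI₂ hI₃
  have hne01 : A ≠ B := by
    simpa using hABC.injective.ne (show (0 : Fin 3) ≠ 1 by decide)
  have hne02 : A ≠ C := by
    simpa using hABC.injective.ne (show (0 : Fin 3) ≠ 2 by decide)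
  have hne12 : B ≠ C := by
    simpa using hABC.injective.ne (show (1 : Fin 3) ≠ 2 by decide)
  have ha : 0 < dist B C := dist_pos.mpr hne12
  have hb : 0 < dist C A := dist_pos.mpr hne02.symm
  have hc : 0 < dist A B := dist_pos.mpr hne01
  constructor
  · obtain ⟨O, R, hO⟩ := hM.2.1
    have hA' : dist A O = R := hO A (by simp)
    have hC' : dist C O = R := hO C (by simp)
    have hCA' : dist C_A O = R := hO C_A (by simp)
    have hI' : dist I O = R := hO I (by simp)
    refine key_lemma ha hb hc ?_ hCA_mem hCAneA (hA'.trans hI'.symm)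
      (hC'.trans hI'.symm) (hCA'.trans hI'.symm)
    linear_combination (norm := module) hIf
  · obtain ⟨O, R, hO⟩ := hM.1
    have hA' : dist A O = R := hO A (by simp)
    have hB' : dist B O = R := hO B (by simp)
    have hBA' : dist B_A O = R := hO B_A (by simp)
    have hI' : dist I O = R := hO I (by simp)
    have ha2 : 0 < dist C B := by rwa [dist_comm]
    have hb2 : 0 < dist B A := by rwa [dist_comm]
    have hc2 : 0 < dist A C := by rwa [dist_comm]
    have hres : dist C B_A = dist C B := by
      refine key_lemma ha2 hb2 hc2 ?_ hBA_mem hBAneA (hA'.trans hI'.symm)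
        (hB'.trans hI'.symm) (hBA'.trans hI'.symm)
      rw [dist_comm C B, dist_comm B A, dist_comm A C]
      linear_combination (norm := module) hIf
    rw [hres, dist_comm]
end

section
/- Let ABC be a triangle none of whose angles is a right angle, and let H be its orthocenter. Let (B_A, C_A) be a cevian pair from A with cevian intersection point N_A and Miquel–Steiner point M_A. Then M_A = H if and only if dist(B, B_A) = dist(B, C) and dist(C, C_A) = dist(B, C). -/
open EuclideanGeometry

private lemma sumsq_eq_zero {x y : ℝ} (h : x^2 + y^2 = 0) : x = 0 ∧ y = 0 :=
  ⟨by nlinarith [sq_nonneg x, sq_nonneg y], by nlinarith [sq_nonneg x, sq_nonneg y]⟩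

private lemma circle_line (v0 v1 p0 p1 t : ℝ) (hv : v0^2 + v1^2 ≠ 0)
    (ht0 : t ≠ 0) (ht1 : t ≠ 1)
    (h1 : v0^2 + v1^2 = 2*(v0*p0 + v1*p1))
    (h2 : t^2*(v0^2 + v1^2) = 2*t*(v0*p0 + v1*p1)) : False := by
  have key : t * ((t - 1) * (v0^2 + v1^2)) = 0 := by linear_combination h2 - t * h1
  rcases mul_eq_zero.mp key with h | h
  · exact ht0 h
  · rcases mul_eq_zero.mp h with h | h
    · exact ht1 (by linarith)
    · exact hv h

private lemma para (z0 z1 w0 w1 : ℝ) (hz : z0^2 + z1^2 ≠ 0) (hc : w0*z1 - w1*z0 = 0) :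
    w0 = (w0*z0 + w1*z1)/(z0^2 + z1^2)*z0 ∧ w1 = (w0*z0 + w1*z1)/(z0^2 + z1^2)*z1 := by
  constructor
  · rw [div_mul_eq_mul_div, eq_div_iff hz]
    linear_combination z1 * hc
  · rw [div_mul_eq_mul_div, eq_div_iff hz]
    linear_combination (-z0) * hc


private lemma coreEq (u0 u1 v0 v1 z0 z1 p0 p1 t : ℝ)
    (hzu : z0*u0 + z1*u1 = u0*v0 + u1*v1)
    (hzv : z0*v0 + z1*v1 = u0*v0 + u1*v1)
    (hf1 : u0^2 + u1^2 = 2*(u0*p0 + u1*p1))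
    (hstar : t*(v0^2 + v1^2) = 2*(v0*p0 + v1*p1)) :
    (u0*v1 - u1*v0)^4 * ((z0^2 + z1^2) - 2*(z0*p0 + z1*p1))
      = -((u0*v0 + u1*v1) * ((u0^2 + u1^2) - (u0*v0 + u1*v1)) * (u0*v1 - u1*v0)^2
          * (t*(v0^2 + v1^2) + (v0^2 + v1^2) - 2*(u0*v0 + u1*v1))) := by
  have hz0 : (u0*v1 - u1*v0)^2 * z0
      = (u0*v0 + u1*v1) * (((v0^2+v1^2) - (u0*v0+u1*v1))*u0 + ((u0^2+u1^2) - (u0*v0+u1*v1))*v0) := by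
    linear_combination ((v0^2+v1^2)*u0 - (u0*v0+u1*v1)*v0) * hzu + ((u0^2+u1^2)*v0 - (u0*v0+u1*v1)*u0) * hzv
  have hz1 : (u0*v1 - u1*v0)^2 * z1
      = (u0*v0 + u1*v1) * (((v0^2+v1^2) - (u0*v0+u1*v1))*u1 + ((u0^2+u1^2) - (u0*v0+u1*v1))*v1) := by
    linear_combination ((v0^2+v1^2)*u1 - (u0*v0+u1*v1)*v1) * hzu + ((u0^2+u1^2)*v1 - (u0*v0+u1*v1)*u1) * hzv
  have hp0 : 2*(u0*v1 - u1*v0)^2 * p0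
      = ((u0^2+u1^2)*(v0^2+v1^2) - t*(v0^2+v1^2)*(u0*v0+u1*v1))*u0
        + (t*(u0^2+u1^2)*(v0^2+v1^2) - (u0^2+u1^2)*(u0*v0+u1*v1))*v0 := by
    linear_combination ((u0*v0+u1*v1)*v0 - (v0^2+v1^2)*u0) * hf1 + ((u0*v0+u1*v1)*u0 - (u0^2+u1^2)*v0) * hstar
  have hp1 : 2*(u0*v1 - u1*v0)^2 * p1
      = ((u0^2+u1^2)*(v0^2+v1^2) - t*(v0^2+v1^2)*(u0*v0+u1*v1))*u1
        + (t*(u0^2+u1^2)*(v0^2+v1^2) - (u0^2+u1^2)*(u0*v0+u1*v1))*v1 := by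
    linear_combination ((u0*v0+u1*v1)*v1 - (v0^2+v1^2)*u1) * hf1 + ((u0*v0+u1*v1)*u1 - (u0^2+u1^2)*v1) * hstar
  linear_combination
    ((u0*v1 - u1*v0)^2*z0 + (u0*v0 + u1*v1)*(((v0^2+v1^2) - (u0*v0+u1*v1))*u0 + ((u0^2+u1^2) - (u0*v0+u1*v1))*v0)
      - (((u0^2+u1^2)*(v0^2+v1^2) - t*(v0^2+v1^2)*(u0*v0+u1*v1))*u0
        + (t*(u0^2+u1^2)*(v0^2+v1^2) - (u0^2+u1^2)*(u0*v0+u1*v1))*v0)) * hz0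
    + ((u0*v1 - u1*v0)^2*z1 + (u0*v0 + u1*v1)*(((v0^2+v1^2) - (u0*v0+u1*v1))*u1 + ((u0^2+u1^2) - (u0*v0+u1*v1))*v1)
      - (((u0^2+u1^2)*(v0^2+v1^2) - t*(v0^2+v1^2)*(u0*v0+u1*v1))*u1
        + (t*(u0^2+u1^2)*(v0^2+v1^2) - (u0^2+u1^2)*(u0*v0+u1*v1))*v1)) * hz1
    - (u0*v1 - u1*v0)^2*z0 * hp0 - (u0*v1 - u1*v0)^2*z1 * hp1

private lemma coreA (u0 u1 v0 v1 z0 z1 p0 p1 t : ℝ)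
    (hP : u0*v1 - u1*v0 ≠ 0)
    (hk : u0*v0 + u1*v1 ≠ 0)
    (hUk : (u0^2 + u1^2) - (u0*v0 + u1*v1) ≠ 0)
    (hzu : z0*u0 + z1*u1 = u0*v0 + u1*v1)
    (hzv : z0*v0 + z1*v1 = u0*v0 + u1*v1)
    (hf1 : u0^2 + u1^2 = 2*(u0*p0 + u1*p1))
    (hstar : t*(v0^2 + v1^2) = 2*(v0*p0 + v1*p1))
    (he3 : z0^2 + z1^2 = 2*(z0*p0 + z1*p1)) :
    t*(v0^2 + v1^2) + (v0^2 + v1^2) - 2*(u0*v0 + u1*v1) = 0 := by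
  have h := coreEq u0 u1 v0 v1 z0 z1 p0 p1 t hzu hzv hf1 hstar
  have hprod : ((u0*v0 + u1*v1) * ((u0^2 + u1^2) - (u0*v0 + u1*v1)) * (u0*v1 - u1*v0)^2)
      * (t*(v0^2 + v1^2) + (v0^2 + v1^2) - 2*(u0*v0 + u1*v1)) = 0 := by
    linear_combination h - (u0*v1 - u1*v0)^4 * he3
  exact (mul_eq_zero.mp hprod).resolve_left
    (mul_ne_zero (mul_ne_zero hk hUk) (pow_ne_zero 2 hP))

private lemma coreB (u0 u1 v0 v1 z0 z1 p0 p1 t : ℝ)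
    (hP : u0*v1 - u1*v0 ≠ 0)
    (hzu : z0*u0 + z1*u1 = u0*v0 + u1*v1)
    (hzv : z0*v0 + z1*v1 = u0*v0 + u1*v1)
    (hf1 : u0^2 + u1^2 = 2*(u0*p0 + u1*p1))
    (hstar : t*(v0^2 + v1^2) = 2*(v0*p0 + v1*p1))
    (hfac : t*(v0^2 + v1^2) + (v0^2 + v1^2) - 2*(u0*v0 + u1*v1) = 0) :
    z0^2 + z1^2 = 2*(z0*p0 + z1*p1) := by
  have h := coreEq u0 u1 v0 v1 z0 z1 p0 p1 t hzu hzv hf1 hstar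
  have hprod : (u0*v1 - u1*v0)^4 * ((z0^2 + z1^2) - 2*(z0*p0 + z1*p1)) = 0 := by
    linear_combination h - ((u0*v0 + u1*v1) * ((u0^2 + u1^2) - (u0*v0 + u1*v1)) * (u0*v1 - u1*v0)^2) * hfac
  have := (mul_eq_zero.mp hprod).resolve_left (pow_ne_zero 4 hP)
  linarith


private lemma coords_ne {x y : EuclideanSpace ℝ (Fin 2)} (h : x ≠ y) :
    (x 0 - y 0)^2 + (x 1 - y 1)^2 ≠ 0 := by
  intro hc
  have h0 : x 0 = y 0 := by nlinarith [sq_nonneg (x 0 - y 0), sq_nonneg (x 1 - y 1)]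
  have h1 : x 1 = y 1 := by nlinarith [sq_nonneg (x 0 - y 0), sq_nonneg (x 1 - y 1)]
  exact h (by ext i; fin_cases i <;> simpa)

private lemma cross_ne {X Y Z : EuclideanSpace ℝ (Fin 2)} (h : AffineIndependent ℝ ![X, Y, Z]) :
    (Y 0 - X 0) * (Z 1 - X 1) - (Y 1 - X 1) * (Z 0 - X 0) ≠ 0 := by
  intro hc
  apply affineIndependent_iff_not_collinear_set.mp h
  rcases eq_or_ne Y X with hYX | hYX
  · rw [hYX, Set.insert_comm, Set.insert_idem]
    exact collinear_pair ℝ X Z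
  · have hD : (Y 0 - X 0)^2 + (Y 1 - X 1)^2 ≠ 0 := coords_ne hYX
    apply (collinear_iff_of_mem (Set.mem_insert X _)).mpr
    refine ⟨Y - X, ?_⟩
    intro p hp
    rcases hp with rfl | rfl | rfl
    · exact ⟨0, by simp⟩
    · exact ⟨1, by ext i; simp [vadd_eq_add]⟩
    · refine ⟨((p 0 - X 0) * (Y 0 - X 0) + (p 1 - X 1) * (Y 1 - X 1)) / ((Y 0 - X 0)^2 + (Y 1 - X 1)^2), ?_⟩
      ext i
      simp only [vadd_eq_add, PiLp.add_apply, PiLp.smul_apply, PiLp.sub_apply, smul_eq_mul]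
      fin_cases i <;> simp only [Fin.zero_eta, Fin.mk_one]
      · show p 0 = _ / _ * _ + _
        rw [div_mul_eq_mul_div, div_add' _ _ _ hD, eq_div_iff hD]
        linear_combination (-(Y 1 - X 1)) * hc
      · show p 1 = _ / _ * _ + _
        rw [div_mul_eq_mul_div, div_add' _ _ _ hD, eq_div_iff hD]
        linear_combination (Y 0 - X 0) * hc


private lemma dist_sq_coords (x y : EuclideanSpace ℝ (Fin 2)) :
    dist x y ^ 2 = (x 0 - y 0)^2 + (x 1 - y 1)^2 := by
  rw [EuclideanSpace.dist_eq, Real.sq_sqrt (by positivity)]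
  simp [Fin.sum_univ_two, Real.dist_eq, sq_abs]

private lemma dist_sq_eq {x y z w : EuclideanSpace ℝ (Fin 2)} (h : dist x y = dist z w) :
    (x 0 - y 0)^2 + (x 1 - y 1)^2 = (z 0 - w 0)^2 + (z 1 - w 1)^2 := by
  rw [← dist_sq_coords, ← dist_sq_coords, h]

private lemma dist_eq_of_sq {x y z w : EuclideanSpace ℝ (Fin 2)}
    (h : (x 0 - y 0)^2 + (x 1 - y 1)^2 = (z 0 - w 0)^2 + (z 1 - w 1)^2) :
    dist x y = dist z w := by
  have h1 : dist x y ^ 2 = dist z w ^ 2 := by rw [dist_sq_coords, dist_sq_coords]; exact h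
  calc dist x y = Real.sqrt (dist x y ^ 2) := (Real.sqrt_sq dist_nonneg).symm
    _ = Real.sqrt (dist z w ^ 2) := by rw [h1]
    _ = dist z w := Real.sqrt_sq dist_nonneg

private lemma ext2 {x y : EuclideanSpace ℝ (Fin 2)} (h0 : x 0 = y 0) (h1 : x 1 = y 1) : x = y := by
  ext i; fin_cases i <;> simp only [Fin.zero_eta, Fin.mk_one] <;> assumption

private lemma lineP {A B P : EuclideanSpace ℝ (Fin 2)} (h : P ∈ line[ℝ, A, B]) :
    ∃ t : ℝ, ∀ i, P i = t * (B i - A i) + A i := by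
  have h2 : (P -ᵥ A) +ᵥ A ∈ line[ℝ, A, B] := by rwa [vsub_vadd]
  obtain ⟨t, ht⟩ := vadd_left_mem_affineSpan_pair.mp h2
  refine ⟨t, fun i => ?_⟩
  have := congrArg (· i) ht
  simp only [vsub_eq_sub, PiLp.smul_apply, PiLp.sub_apply, smul_eq_mul] at this
  linarith [this]

private lemma inner_ne_of_angle {X Y Z : EuclideanSpace ℝ (Fin 2)}
    (h : EuclideanGeometry.angle X Y Z ≠ Real.pi / 2) : (inner ℝ (X - Y) (Z - Y) : ℝ) ≠ 0 := by
  intro hc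
  exact h (InnerProductGeometry.inner_eq_zero_iff_angle_eq_pi_div_two _ _ |>.mp (by
    simpa [vsub_eq_sub] using hc))

private lemma cosph4 {P Q R S : EuclideanSpace ℝ (Fin 2)}
    (h : Cospherical ({P, Q, R, S} : Set (EuclideanSpace ℝ (Fin 2)))) :
    ∃ o : EuclideanSpace ℝ (Fin 2),
      dist P o = dist Q o ∧ dist P o = dist R o ∧ dist P o = dist S o := by
  obtain ⟨o, r, ho⟩ := h
  exact ⟨o, by rw [ho P (by simp), ho Q (by simp)], by rw [ho P (by simp), ho R (by simp)],
    by rw [ho P (by simp), ho S (by simp)]⟩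







private lemma mainReal
    (a0 a1 b0 b1 c0 c1 h0 h1 ba0 ba1 ca0 ca1 m0 m1
      o10 o11 o20 o21 o30 o31 t s : ℝ)
    (hP : (b0-a0)*(c1-a1) - (b1-a1)*(c0-a0) ≠ 0)
    (hk : (b0-a0)*(c0-a0) + (b1-a1)*(c1-a1) ≠ 0)
    (hkB : (a0-b0)*(c0-b0) + (a1-b1)*(c1-b1) ≠ 0)
    (hkC : (a0-c0)*(b0-c0) + (a1-c1)*(b1-c1) ≠ 0)
    (hH2 : (h0-b0)*(c0-a0) + (h1-b1)*(c1-a1) = 0)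
    (hH3 : (h0-c0)*(b0-a0) + (h1-c1)*(b1-a1) = 0)
    (hba0 : ba0 = t*(c0-a0) + a0) (hba1 : ba1 = t*(c1-a1) + a1)
    (hca0 : ca0 = s*(b0-a0) + a0) (hca1 : ca1 = s*(b1-a1) + a1)
    (ht0 : t ≠ 0) (ht1 : t ≠ 1) (hs0 : s ≠ 0) (hs1 : s ≠ 1)
    (e1B : (a0-o10)^2+(a1-o11)^2 = (b0-o10)^2+(b1-o11)^2)
    (e1BA : (a0-o10)^2+(a1-o11)^2 = (ba0-o10)^2+(ba1-o11)^2)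
    (e1M : (a0-o10)^2+(a1-o11)^2 = (m0-o10)^2+(m1-o11)^2)
    (e2C : (a0-o20)^2+(a1-o21)^2 = (c0-o20)^2+(c1-o21)^2)
    (e2CA : (a0-o20)^2+(a1-o21)^2 = (ca0-o20)^2+(ca1-o21)^2)
    (e2M : (a0-o20)^2+(a1-o21)^2 = (m0-o20)^2+(m1-o21)^2)
    (e3C : (c0-o30)^2+(c1-o31)^2 = (m0-o30)^2+(m1-o31)^2)
    (e3BA : (ba0-o30)^2+(ba1-o31)^2 = (m0-o30)^2+(m1-o31)^2) :
    ((m0 = h0 ∧ m1 = h1) ↔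
      ((b0-ba0)^2+(b1-ba1)^2 = (b0-c0)^2+(b1-c1)^2 ∧
       (c0-ca0)^2+(c1-ca1)^2 = (b0-c0)^2+(b1-c1)^2)) := by
  subst hba0 hba1 hca0 hca1
  -- common facts
  have hzu : (h0-a0)*(b0-a0) + (h1-a1)*(b1-a1) = (b0-a0)*(c0-a0) + (b1-a1)*(c1-a1) := by
    linear_combination hH3
  have hzv : (h0-a0)*(c0-a0) + (h1-a1)*(c1-a1) = (b0-a0)*(c0-a0) + (b1-a1)*(c1-a1) := by
    linear_combination hH2
  have hzu' : (h0-a0)*(c0-a0) + (h1-a1)*(c1-a1) = (c0-a0)*(b0-a0) + (c1-a1)*(b1-a1) := by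
    linear_combination hH2
  have hzv' : (h0-a0)*(b0-a0) + (h1-a1)*(b1-a1) = (c0-a0)*(b0-a0) + (c1-a1)*(b1-a1) := by
    linear_combination hH3
  have hP' : (c0-a0)*(b1-a1) - (c1-a1)*(b0-a0) ≠ 0 := fun hcon => hP (by linear_combination -hcon)
  have hk' : (c0-a0)*(b0-a0) + (c1-a1)*(b1-a1) ≠ 0 := fun hcon => hk (by linear_combination hcon)
  have hUk : ((b0-a0)^2 + (b1-a1)^2) - ((b0-a0)*(c0-a0) + (b1-a1)*(c1-a1)) ≠ 0 :=
    fun hcon => hkB (by linear_combination hcon)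
  have hVk : ((c0-a0)^2 + (c1-a1)^2) - ((c0-a0)*(b0-a0) + (c1-a1)*(b1-a1)) ≠ 0 :=
    fun hcon => hkC (by linear_combination hcon)
  have hU : (b0-a0)^2 + (b1-a1)^2 ≠ 0 := by
    intro hcon
    obtain ⟨g0, g1⟩ := sumsq_eq_zero hcon
    exact hP (by rw [g0, g1]; ring)
  have hV : (c0-a0)^2 + (c1-a1)^2 ≠ 0 := by
    intro hcon
    obtain ⟨g0, g1⟩ := sumsq_eq_zero hcon
    exact hP (by rw [g0, g1]; ring)
  have hf1 : (b0-a0)^2 + (b1-a1)^2 = 2*((b0-a0)*(o10-a0) + (b1-a1)*(o11-a1)) := by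
    linear_combination -e1B
  have hstar1 : t*((c0-a0)^2 + (c1-a1)^2) = 2*((c0-a0)*(o10-a0) + (c1-a1)*(o11-a1)) :=
    mul_left_cancel₀ ht0 (by linear_combination -e1BA)
  have hf2 : (c0-a0)^2 + (c1-a1)^2 = 2*((c0-a0)*(o20-a0) + (c1-a1)*(o21-a1)) := by
    linear_combination -e2C
  have hstar2 : s*((b0-a0)^2 + (b1-a1)^2) = 2*((b0-a0)*(o20-a0) + (b1-a1)*(o21-a1)) :=
    mul_left_cancel₀ hs0 (by linear_combination -e2CA)
  constructor
  · rintro ⟨hm0, hm1⟩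
    have e1M' : (a0-o10)^2+(a1-o11)^2 = (h0-o10)^2+(h1-o11)^2 := by
      rw [← hm0, ← hm1]; exact e1M
    have e2M' : (a0-o20)^2+(a1-o21)^2 = (h0-o20)^2+(h1-o21)^2 := by
      rw [← hm0, ← hm1]; exact e2M
    have he31 : (h0-a0)^2 + (h1-a1)^2 = 2*((h0-a0)*(o10-a0) + (h1-a1)*(o11-a1)) := by
      linear_combination -e1M'
    have he32 : (h0-a0)^2 + (h1-a1)^2 = 2*((h0-a0)*(o20-a0) + (h1-a1)*(o21-a1)) := by
      linear_combination -e2M'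
    have fac1 := coreA (b0-a0) (b1-a1) (c0-a0) (c1-a1) (h0-a0) (h1-a1) (o10-a0) (o11-a1) t
      hP hk hUk hzu hzv hf1 hstar1 he31
    have fac2 := coreA (c0-a0) (c1-a1) (b0-a0) (b1-a1) (h0-a0) (h1-a1) (o20-a0) (o21-a1) s
      hP' hk' hVk hzu' hzv' hf2 hstar2 he32
    constructor
    · linear_combination (t-1) * fac1
    · linear_combination (s-1) * fac2
  · rintro ⟨hd1, hd2⟩
    have hfac1 : t*((c0-a0)^2 + (c1-a1)^2) + ((c0-a0)^2 + (c1-a1)^2)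
        - 2*((b0-a0)*(c0-a0) + (b1-a1)*(c1-a1)) = 0 := by
      have hpr : (t-1) * (t*((c0-a0)^2 + (c1-a1)^2) + ((c0-a0)^2 + (c1-a1)^2)
          - 2*((b0-a0)*(c0-a0) + (b1-a1)*(c1-a1))) = 0 := by linear_combination hd1
      exact (mul_eq_zero.mp hpr).resolve_left (sub_ne_zero.mpr ht1)
    have hfac2 : s*((b0-a0)^2 + (b1-a1)^2) + ((b0-a0)^2 + (b1-a1)^2)
        - 2*((c0-a0)*(b0-a0) + (c1-a1)*(b1-a1)) = 0 := by
      have hpr : (s-1) * (s*((b0-a0)^2 + (b1-a1)^2) + ((b0-a0)^2 + (b1-a1)^2)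
          - 2*((c0-a0)*(b0-a0) + (c1-a1)*(b1-a1))) = 0 := by linear_combination hd2
      exact (mul_eq_zero.mp hpr).resolve_left (sub_ne_zero.mpr hs1)
    have he31 := coreB (b0-a0) (b1-a1) (c0-a0) (c1-a1) (h0-a0) (h1-a1) (o10-a0) (o11-a1) t
      hP hzu hzv hf1 hstar1 hfac1
    have he32 := coreB (c0-a0) (c1-a1) (b0-a0) (b1-a1) (h0-a0) (h1-a1) (o20-a0) (o21-a1) s
      hP' hzu' hzv' hf2 hstar2 hfac2
    have hwm1 : (m0-a0)^2 + (m1-a1)^2 = 2*((m0-a0)*(o10-a0) + (m1-a1)*(o11-a1)) := by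
      linear_combination -e1M
    have hwm2 : (m0-a0)^2 + (m1-a1)^2 = 2*((m0-a0)*(o20-a0) + (m1-a1)*(o21-a1)) := by
      linear_combination -e2M
    -- M ≠ A
    have hMA : ¬(m0 = a0 ∧ m1 = a1) := by
      rintro ⟨rfl, rfl⟩
      refine circle_line (c0-m0) (c1-m1) (o30-m0) (o31-m1) t hV ht0 ht1 ?_ ?_
      · linear_combination e3C
      · linear_combination e3BA
    have hw : (m0-a0)^2 + (m1-a1)^2 ≠ 0 := by
      intro hcon
      obtain ⟨g0, g1⟩ := sumsq_eq_zero hcon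
      exact hMA ⟨by linarith, by linarith⟩
    have hz : (h0-a0)^2 + (h1-a1)^2 ≠ 0 := by
      intro hcon
      obtain ⟨g0, g1⟩ := sumsq_eq_zero hcon
      exact hk (by linear_combination -hzv + (c0-a0)*g0 + (c1-a1)*g1)
    -- centers distinct
    have ho12 : ¬(o10 = o20 ∧ o11 = o21) := by
      rintro ⟨g0, g1⟩
      subst g0 g1
      refine circle_line (b0-a0) (b1-a1) (o10-a0) (o11-a1) s hU hs0 hs1 hf1 ?_
      linear_combination -e2CA
    have hperpw : (m0-a0)*(o10-o20) + (m1-a1)*(o11-o21) = 0 := by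
      linear_combination (-1/2)*hwm1 + (1/2)*hwm2
    have hperpz : (h0-a0)*(o10-o20) + (h1-a1)*(o11-o21) = 0 := by
      linear_combination (-1/2)*he31 + (1/2)*he32
    have k1 : ((m0-a0)*(h1-a1) - (m1-a1)*(h0-a0))*(o11-o21) = 0 := by
      linear_combination (m0-a0)*hperpz - (h0-a0)*hperpw
    have k0 : ((m0-a0)*(h1-a1) - (m1-a1)*(h0-a0))*(o10-o20) = 0 := by
      linear_combination (h1-a1)*hperpw - (m1-a1)*hperpz
    have hcross : (m0-a0)*(h1-a1) - (m1-a1)*(h0-a0) = 0 := by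
      by_cases hd0 : o10 - o20 = 0
      · have hd1' : o11 - o21 ≠ 0 := fun hcon => ho12 ⟨by linarith, by linarith⟩
        exact (mul_eq_zero.mp k1).resolve_right hd1'
      · exact (mul_eq_zero.mp k0).resolve_right hd0
    obtain ⟨hw0, hw1⟩ := para (h0-a0) (h1-a1) (m0-a0) (m1-a1) hz hcross
    set L := ((m0-a0)*(h0-a0) + (m1-a1)*(h1-a1))/((h0-a0)^2 + (h1-a1)^2) with hL
    have eA : (m0-a0)^2 + (m1-a1)^2 = L^2*((h0-a0)^2 + (h1-a1)^2) := by
      linear_combination ((m0-a0) + L*(h0-a0))*hw0 + ((m1-a1) + L*(h1-a1))*hw1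
    have eB : 2*((m0-a0)*(o10-a0) + (m1-a1)*(o11-a1)) = L*((h0-a0)^2 + (h1-a1)^2) := by
      linear_combination 2*(o10-a0)*hw0 + 2*(o11-a1)*hw1 - L*he31
    have hlam : L*((L-1)*((h0-a0)^2 + (h1-a1)^2)) = 0 := by
      linear_combination hwm1 - eA + eB
    rcases mul_eq_zero.mp hlam with hL0 | hrest
    · exfalso
      apply hw
      rw [hL0] at hw0 hw1
      rw [hw0, hw1]; ring
    · rcases mul_eq_zero.mp hrest with hL1 | hZ0
      · have hL1' : L = 1 := by linarith
        constructor
        · linear_combination hw0 + (h0-a0)*hL1'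
        · linear_combination hw1 + (h1-a1)*hL1'
      · exact absurd hZ0 hz


/-- Suppose no angle of triangle `ABC` is a right angle and `H` is its orthocenter
(the common point of the three altitudes). Then the Miquel–Steiner point `M_A` of a
cevian pair `(B_A, C_A)` from `A` equals `H` if and only if
`dist B B_A = dist B C` and `dist C C_A = dist B C`. -/
theorem miquel_point_eq_orthocenter_iff
    (A B C B_A C_A N_A M_A H : EuclideanSpace ℝ (Fin 2))
    (hABC : AffineIndependent ℝ ![A, B, C])
    (hang₁ : EuclideanGeometry.angle B A C ≠ Real.pi / 2)
    (hang₂ : EuclideanGeometry.angle A B C ≠ Real.pi / 2)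
    (hang₃ : EuclideanGeometry.angle A C B ≠ Real.pi / 2)
    (hH₁ : (inner ℝ (H - A) (C - B) : ℝ) = 0)
    (hH₂ : (inner ℝ (H - B) (C - A) : ℝ) = 0)
    (hH₃ : (inner ℝ (H - C) (B - A) : ℝ) = 0)
    (hcev : IsCevianPair A B C B_A C_A)
    (hN₁ : N_A ∈ line[ℝ, B, B_A]) (hN₂ : N_A ∈ line[ℝ, C, C_A])
    (hCBN : AffineIndependent ℝ ![C, B_A, N_A])
    (hBCN : AffineIndependent ℝ ![B, C_A, N_A])
    (hM : IsMiquelPoint A B C B_A C_A N_A M_A) :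
    M_A = H ↔ (dist B B_A = dist B C ∧ dist C C_A = dist B C) := by
  obtain ⟨hBAl, hBAA, hBAC, hCAl, hCAA, hCAB, -⟩ := hcev
  obtain ⟨t, hba⟩ := lineP hBAl
  obtain ⟨s, hca⟩ := lineP hCAl
  have ht0 : t ≠ 0 := fun h => hBAA (ext2 (by rw [hba 0, h]; ring) (by rw [hba 1, h]; ring))
  have ht1 : t ≠ 1 := fun h => hBAC (ext2 (by rw [hba 0, h]; ring) (by rw [hba 1, h]; ring))
  have hs0 : s ≠ 0 := fun h => hCAA (ext2 (by rw [hca 0, h]; ring) (by rw [hca 1, h]; ring))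
  have hs1 : s ≠ 1 := fun h => hCAB (ext2 (by rw [hca 0, h]; ring) (by rw [hca 1, h]; ring))
  have hPc : (B 0 - A 0) * (C 1 - A 1) - (B 1 - A 1) * (C 0 - A 0) ≠ 0 := cross_ne hABC
  have hkc : (B 0 - A 0) * (C 0 - A 0) + (B 1 - A 1) * (C 1 - A 1) ≠ 0 := by
    intro hcon
    apply inner_ne_of_angle hang₁
    simp only [PiLp.inner_apply, PiLp.sub_apply, RCLike.inner_apply, conj_trivial,
      Fin.sum_univ_two]
    linear_combination hcon
  have hkBc : (A 0 - B 0) * (C 0 - B 0) + (A 1 - B 1) * (C 1 - B 1) ≠ 0 := by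
    intro hcon
    apply inner_ne_of_angle hang₂
    simp only [PiLp.inner_apply, PiLp.sub_apply, RCLike.inner_apply, conj_trivial,
      Fin.sum_univ_two]
    linear_combination hcon
  have hkCc : (A 0 - C 0) * (B 0 - C 0) + (A 1 - C 1) * (B 1 - C 1) ≠ 0 := by
    intro hcon
    apply inner_ne_of_angle hang₃
    simp only [PiLp.inner_apply, PiLp.sub_apply, RCLike.inner_apply, conj_trivial,
      Fin.sum_univ_two]
    linear_combination hcon
  have hH2c : (H 0 - B 0) * (C 0 - A 0) + (H 1 - B 1) * (C 1 - A 1) = 0 := by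
    have := hH₂
    simp only [PiLp.inner_apply, PiLp.sub_apply, RCLike.inner_apply, conj_trivial,
      Fin.sum_univ_two] at this
    linear_combination this
  have hH3c : (H 0 - C 0) * (B 0 - A 0) + (H 1 - C 1) * (B 1 - A 1) = 0 := by
    have := hH₃
    simp only [PiLp.inner_apply, PiLp.sub_apply, RCLike.inner_apply, conj_trivial,
      Fin.sum_univ_two] at this
    linear_combination this
  obtain ⟨hc1, hc2, hc3, -⟩ := hM
  obtain ⟨o1, h1B, h1BA, h1M⟩ := cosph4 hc1
  obtain ⟨o2, h2C, h2CA, h2M⟩ := cosph4 hc2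
  obtain ⟨o3, h3BA, -, h3M⟩ := cosph4 hc3
  have key := mainReal (A 0) (A 1) (B 0) (B 1) (C 0) (C 1) (H 0) (H 1) (B_A 0) (B_A 1)
    (C_A 0) (C_A 1) (M_A 0) (M_A 1) (o1 0) (o1 1) (o2 0) (o2 1) (o3 0) (o3 1) t s
    hPc hkc hkBc hkCc hH2c hH3c (hba 0) (hba 1) (hca 0) (hca 1) ht0 ht1 hs0 hs1
    (dist_sq_eq h1B) (dist_sq_eq h1BA) (dist_sq_eq h1M)
    (dist_sq_eq h2C) (dist_sq_eq h2CA) (dist_sq_eq h2M)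
    (dist_sq_eq h3M) (dist_sq_eq ((h3BA.symm).trans h3M))
  constructor
  · intro hMH
    obtain ⟨g1, g2⟩ := key.mp ⟨by rw [hMH], by rw [hMH]⟩
    exact ⟨dist_eq_of_sq g1, dist_eq_of_sq g2⟩
  · rintro ⟨g1, g2⟩
    obtain ⟨g3, g4⟩ := key.mpr ⟨dist_sq_eq g1, dist_sq_eq g2⟩
    exact ext2 g3 g4
end
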